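/- arXiv:1512.01452 — 5 statements merged into one kernel-verified Lean document; each statement's English description precedes it below -/
import Mathlib

section
/- Let a, ρ > 0. There exists a constant C > 0, depending only on a and ρ, such that for every measurable ψ : ℝ → ℂ with ∫_ℝ |ψ(ξ)|² e^{a e^{ρξ}} dξ < ∞ and f(z) = (2π)^{-1/2} ∫_ℝ ψ(ξ) e^{zξ} dξ, one has for all z with Re z > 0: |f(z)| ≤ C·(∫_ℝ |ψ(ξ)|² e^{a e^{ρξ}} dξ)^{1/2}·(Re z)^{1/4}·(2/a)^{(Re z)/ρ}·Γ((Re z)/ρ), where Γ is the real Gamma function. (Growth estimate for functions in M²_{a,ρ}: every f ∈ M²_{a,ρ} satisfies |f(z)| ≤ C‖f‖ (Re z)^{1/4} (2/a)^{(Re z)/ρ} Γ((Re z)/ρ).) -/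
open MeasureTheory Complex Set

lemma sqrt_amgm {u v t : ℝ} (ht : 0 < t) (hu : 0 ≤ u) (hv : 0 ≤ v) :
    Real.sqrt u * Real.sqrt v ≤ (t * u + v / t) / 2 := by
  have h1 : Real.sqrt (t * u) * Real.sqrt (v / t) = Real.sqrt u * Real.sqrt v := by
    rw [← Real.sqrt_mul (by positivity), ← Real.sqrt_mul hu]
    congr 1
    field_simp
  have h2 := sq_nonneg (Real.sqrt (t * u) - Real.sqrt (v / t))
  have h3 : Real.sqrt (t * u) ^ 2 = t * u := Real.sq_sqrt (by positivity)
  have h4 : Real.sqrt (v / t) ^ 2 = v / t := Real.sq_sqrt (by positivity)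
  nlinarith [h1, h2, h3, h4]

lemma gautschi {s : ℝ} (hs : 0 < s) :
    Real.Gamma (s + 1 / 2) ≤ Real.sqrt s * Real.Gamma s := by
  have hc := Real.convexOn_log_Gamma.2 (Set.mem_Ioi.mpr hs)
    (Set.mem_Ioi.mpr (by linarith : (0:ℝ) < s + 1))
    (by norm_num : (0:ℝ) ≤ 1/2) (by norm_num : (0:ℝ) ≤ 1/2) (by norm_num)
  simp only [Function.comp, smul_eq_mul] at hc
  rw [show (1/2:ℝ) * s + 1/2 * (s+1) = s + 1/2 by ring] at hc
  have hΓs := Real.Gamma_pos_of_pos hs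
  have hΓs1 := Real.Gamma_pos_of_pos (by linarith : (0:ℝ) < s + 1)
  have hΓh := Real.Gamma_pos_of_pos (by linarith : (0:ℝ) < s + 1/2)
  have key := Real.exp_le_exp.mpr hc
  rw [Real.exp_log hΓh, Real.exp_add] at key
  have e1 : Real.exp (1/2 * Real.log (Real.Gamma s)) = Real.sqrt (Real.Gamma s) := by
    rw [show (1/2:ℝ) * Real.log (Real.Gamma s) = Real.log (Real.Gamma s) / 2 by ring,
      ← Real.log_sqrt hΓs.le, Real.exp_log (Real.sqrt_pos.mpr hΓs)]
  have e2 : Real.exp (1/2 * Real.log (Real.Gamma (s+1))) = Real.sqrt (Real.Gamma (s+1)) := by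
    rw [show (1/2:ℝ) * Real.log (Real.Gamma (s+1)) = Real.log (Real.Gamma (s+1)) / 2 by ring,
      ← Real.log_sqrt hΓs1.le, Real.exp_log (Real.sqrt_pos.mpr hΓs1)]
  rw [e1, e2, Real.Gamma_add_one hs.ne', Real.sqrt_mul hs.le] at key
  calc Real.Gamma (s + 1/2) ≤ Real.sqrt (Real.Gamma s) * (Real.sqrt s * Real.sqrt (Real.Gamma s)) := key
    _ = Real.sqrt s * (Real.sqrt (Real.Gamma s) * Real.sqrt (Real.Gamma s)) := by ring
    _ = Real.sqrt s * Real.Gamma s := by rw [Real.mul_self_sqrt hΓs.le]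

lemma dup_bound {s : ℝ} (hs : 0 < s) :
    Real.Gamma (2 * s) ≤ (2:ℝ) ^ (2*s) * Real.sqrt s * (Real.Gamma s) ^ 2 := by
  have h := Real.Gamma_mul_Gamma_add_half s
  have hg := gautschi hs
  have hP : (0:ℝ) < (2:ℝ) ^ (1 - 2*s) := Real.rpow_pos_of_pos two_pos _
  have hQ : (0:ℝ) < (2:ℝ) ^ (2*s) := Real.rpow_pos_of_pos two_pos _
  have hπ : 1 ≤ Real.sqrt Real.pi := by
    rw [show (1:ℝ) = Real.sqrt 1 by simp]
    exact Real.sqrt_le_sqrt (by linarith [Real.pi_gt_three])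
  have hΓs := Real.Gamma_pos_of_pos hs
  have hΓ2s := Real.Gamma_pos_of_pos (by linarith : (0:ℝ) < 2*s)
  have hss : (0:ℝ) < Real.sqrt s := Real.sqrt_pos.mpr hs
  have hrw : (2:ℝ) ^ (1 - 2*s) * (2:ℝ) ^ (2*s) = 2 := by
    rw [← Real.rpow_add two_pos]; norm_num
  have h1 : Real.Gamma s * Real.Gamma (s + 1/2) ≤ Real.sqrt s * (Real.Gamma s)^2 := by
    nlinarith [mul_le_mul_of_nonneg_left hg hΓs.le]
  have h2 : Real.Gamma (2*s) * (2:ℝ) ^ (1 - 2*s) ≤ Real.Gamma (2*s) * (2:ℝ) ^ (1 - 2*s) * Real.sqrt Real.pi := by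
    nlinarith [mul_pos hΓ2s hP]
  have hkey : Real.Gamma (2*s) * (2:ℝ) ^ (1 - 2*s) ≤ Real.sqrt s * (Real.Gamma s)^2 := by
    linarith [h, h1, h2]
  nlinarith [hkey, hrw, hΓ2s, hQ, hss, sq_nonneg (Real.Gamma s), mul_le_mul_of_nonneg_right hkey hQ.le]

lemma key_int {a ρ x : ℝ} (ha : 0 < a) (hρ : 0 < ρ) (hx : 0 < x) :
    Integrable (fun ξ : ℝ => Real.exp (2*x*ξ - a * Real.exp (ρ*ξ))) ∧
      ∫ ξ : ℝ, Real.exp (2*x*ξ - a * Real.exp (ρ*ξ))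
        = Real.Gamma (2*x/ρ) / (ρ * a ^ (2*x/ρ)) := by
  set s : ℝ := 2*x/ρ with hs_def
  have hs : 0 < s := by positivity
  have hρs : ρ * s = 2*x := by rw [hs_def]; field_simp
  set φ : ℝ → ℝ := fun ξ => a * Real.exp (ρ*ξ) with hφ_def
  have hderiv : ∀ ξ ∈ (univ : Set ℝ),
      HasDerivWithinAt φ (a * ρ * Real.exp (ρ*ξ)) univ ξ := by
    intro ξ _
    have h0 : HasDerivAt (fun ξ : ℝ => ρ * ξ) ρ ξ := by
      simpa using (hasDerivAt_id ξ).const_mul ρ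
    have h1 : HasDerivAt (fun ξ : ℝ => Real.exp (ρ*ξ)) (Real.exp (ρ*ξ) * ρ) ξ :=
      (Real.hasDerivAt_exp (ρ*ξ)).comp ξ h0
    have h2 := h1.const_mul a
    have : a * (Real.exp (ρ*ξ) * ρ) = a * ρ * Real.exp (ρ*ξ) := by ring
    rw [this] at h2
    exact h2.hasDerivWithinAt
  have hinj : InjOn φ univ := by
    intro ξ₁ _ ξ₂ _ h
    have h' : Real.exp (ρ*ξ₁) = Real.exp (ρ*ξ₂) := mul_left_cancel₀ ha.ne' h
    have := Real.exp_injective h'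
    exact mul_left_cancel₀ hρ.ne' this
  have himg : φ '' univ = Ioi 0 := by
    ext t
    simp only [image_univ, mem_range, mem_Ioi]
    constructor
    · rintro ⟨ξ, rfl⟩; positivity
    · intro ht
      refine ⟨Real.log (t/a) / ρ, ?_⟩
      rw [hφ_def]
      simp only
      rw [mul_div_cancel₀ _ hρ.ne', Real.exp_log (by positivity)]
      field_simp
  set g : ℝ → ℝ := fun t => Real.exp (-t) * t ^ (s-1) with hg_def
  have hgint : IntegrableOn g (Ioi 0) := Real.GammaIntegral_convergent hs
  have hpt : ∀ ξ : ℝ, |a * ρ * Real.exp (ρ*ξ)| • g (φ ξ)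
      = (ρ * a ^ s) * Real.exp (2*x*ξ - a * Real.exp (ρ*ξ)) := by
    intro ξ
    rw [abs_of_pos (by positivity), smul_eq_mul, hg_def, hφ_def]
    simp only
    rw [Real.mul_rpow ha.le (Real.exp_pos _).le, ← Real.exp_mul]
    rw [show a ^ (s-1) = a ^ s / a by rw [Real.rpow_sub ha, Real.rpow_one]]
    have hexp : Real.exp (2*x*ξ - a*Real.exp (ρ*ξ))
        = Real.exp (ρ*ξ) * Real.exp (ρ*ξ*(s-1)) * Real.exp (-(a*Real.exp (ρ*ξ))) := by
      rw [← Real.exp_add, ← Real.exp_add]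
      congr 1
      rw [hs_def]
      field_simp
      ring
    rw [hexp]
    field_simp
  have hiff := integrableOn_image_iff_integrableOn_abs_deriv_smul
    MeasurableSet.univ hderiv hinj g
  rw [himg] at hiff
  have hint2 : IntegrableOn (fun ξ => |a * ρ * Real.exp (ρ*ξ)| • g (φ ξ)) univ := hiff.mp hgint
  rw [integrableOn_univ] at hint2
  have hint3 : Integrable (fun ξ : ℝ => (ρ * a ^ s) * Real.exp (2*x*ξ - a * Real.exp (ρ*ξ))) := by
    refine hint2.congr ?_
    exact Filter.Eventually.of_forall hpt
  have hC : (0:ℝ) < ρ * a ^ s := by positivity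
  constructor
  · have := hint3.const_mul (ρ * a ^ s)⁻¹
    refine this.congr (Filter.Eventually.of_forall fun ξ => ?_)
    field_simp
  · have heq := integral_image_eq_integral_abs_deriv_smul MeasurableSet.univ hderiv hinj g
    rw [himg, Measure.restrict_univ] at heq
    have : ∫ ξ : ℝ, |a * ρ * Real.exp (ρ*ξ)| • g (φ ξ)
        = (ρ * a ^ s) * ∫ ξ : ℝ, Real.exp (2*x*ξ - a * Real.exp (ρ*ξ)) := by
      rw [← integral_const_mul]
      exact integral_congr_ae (Filter.Eventually.of_forall hpt)
    rw [this] at heq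
    have hΓ : Real.Gamma s = ∫ t in Ioi (0:ℝ), g t := Real.Gamma_eq_integral hs
    rw [← hΓ] at heq
    rw [eq_div_iff hC.ne']
    linarith [heq]

/-- Growth estimate for functions in `M²_{a,ρ}`: there is `C > 0` (depending only on `a, ρ`)
such that every `f(z) = (2π)^{-1/2} ∫ ψ(ξ) e^{zξ} dξ`, with `ψ ∈ L²(ℝ, e^{a e^{ρξ}} dξ)`,
satisfies `|f(z)| ≤ C ‖ψ‖ (Re z)^{1/4} (2/a)^{Re z/ρ} Γ(Re z/ρ)` on the right half-plane. -/
theorem stmt_3 (a ρ : ℝ) (ha : 0 < a) (hρ : 0 < ρ) :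
    ∃ C > 0, ∀ ψ : ℝ → ℂ, Measurable ψ →
      Integrable (fun ξ : ℝ => ‖ψ ξ‖ ^ 2 * Real.exp (a * Real.exp (ρ * ξ))) →
      ∀ z : ℂ, 0 < z.re →
        ‖(Real.sqrt (2 * Real.pi))⁻¹ • ∫ ξ : ℝ, ψ ξ * Complex.exp (z * (ξ : ℂ))‖
          ≤ C * Real.sqrt (∫ ξ : ℝ, ‖ψ ξ‖ ^ 2 * Real.exp (a * Real.exp (ρ * ξ)))
            * z.re ^ ((1 : ℝ) / 4) * (2 / a) ^ (z.re / ρ) * Real.Gamma (z.re / ρ) := by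
  refine ⟨(Real.sqrt (2 * Real.pi))⁻¹ * ((Real.sqrt ρ)⁻¹ * (ρ ^ ((1:ℝ)/4))⁻¹),
    by positivity, ?_⟩
  intro ψ hψm hψint z hz
  obtain ⟨hBint, hBeq⟩ := key_int (x := z.re) ha hρ hz
  set x : ℝ := z.re with hx_def
  have hs : 0 < x / ρ := by positivity
  set A : ℝ := ∫ ξ : ℝ, ‖ψ ξ‖ ^ 2 * Real.exp (a * Real.exp (ρ * ξ)) with hA_def
  set B : ℝ := ∫ ξ : ℝ, Real.exp (2*x*ξ - a * Real.exp (ρ*ξ)) with hB_def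
  have hA0 : 0 ≤ A := integral_nonneg fun ξ => by positivity
  have h2s : 2*x/ρ = 2*(x/ρ) := by ring
  have hΓ2 := Real.Gamma_pos_of_pos (show (0:ℝ) < 2*(x/ρ) by positivity)
  have hΓ := Real.Gamma_pos_of_pos hs
  have hBpos : 0 < B := by
    rw [hBeq, h2s]
    exact div_pos hΓ2 (by positivity)
  -- Step 1 : bound the norm of the integral by the integral of norms
  have hnorm : ∀ ξ : ℝ, ‖ψ ξ * Complex.exp (z * (ξ:ℂ))‖ = ‖ψ ξ‖ * Real.exp (x*ξ) := by
    intro ξ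
    rw [norm_mul, Complex.norm_exp]
    congr 1
    simp [Complex.mul_re, hx_def]
  have h1 : ‖∫ ξ : ℝ, ψ ξ * Complex.exp (z * (ξ:ℂ))‖
      ≤ ∫ ξ : ℝ, ‖ψ ξ‖ * Real.exp (x*ξ) := by
    calc ‖∫ ξ : ℝ, ψ ξ * Complex.exp (z * (ξ:ℂ))‖
        ≤ ∫ ξ : ℝ, ‖ψ ξ * Complex.exp (z * (ξ:ℂ))‖ := norm_integral_le_integral_norm _
      _ = ∫ ξ : ℝ, ‖ψ ξ‖ * Real.exp (x*ξ) :=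
          integral_congr_ae (Filter.Eventually.of_forall hnorm)
  rcases hA0.eq_or_lt with hA | hA
  · -- degenerate case: ψ = 0 a.e.
    have hz0 : (fun ξ : ℝ => ‖ψ ξ‖ ^ 2 * Real.exp (a * Real.exp (ρ * ξ))) =ᵐ[volume] 0 :=
      (integral_eq_zero_iff_of_nonneg (fun ξ => by positivity) hψint).mp hA.symm
    have hψ0 : (fun ξ : ℝ => ψ ξ * Complex.exp (z * (ξ:ℂ))) =ᵐ[volume] 0 := by
      refine hz0.mono fun ξ hξ => ?_
      have hξ' : ‖ψ ξ‖ ^ 2 * Real.exp (a * Real.exp (ρ * ξ)) = 0 := hξ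
      have : ψ ξ = 0 := by
        have hn : ‖ψ ξ‖ = 0 := by
          have := (Real.exp_pos (a * Real.exp (ρ * ξ))).ne'
          have h2 : ‖ψ ξ‖ ^ 2 = 0 := by
            by_contra hc
            exact hc (by nlinarith [Real.exp_pos (a * Real.exp (ρ * ξ)), sq_nonneg ‖ψ ξ‖])
          exact pow_eq_zero_iff (n := 2) (by norm_num) |>.mp h2
        exact norm_eq_zero.mp hn
      simp [this]
    rw [integral_eq_zero_of_ae hψ0, ← hA]
    simp
  · -- main case : Cauchy–Schwarz via AM–GM
    set t : ℝ := Real.sqrt B / Real.sqrt A with ht_def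
    have ht : 0 < t := div_pos (Real.sqrt_pos.mpr hBpos) (Real.sqrt_pos.mpr hA)
    have hpt : ∀ ξ : ℝ, ‖ψ ξ‖ * Real.exp (x*ξ)
        ≤ (t * (‖ψ ξ‖ ^ 2 * Real.exp (a * Real.exp (ρ * ξ)))
            + Real.exp (2*x*ξ - a * Real.exp (ρ*ξ)) / t) / 2 := by
      intro ξ
      have hprod : Real.sqrt (‖ψ ξ‖ ^ 2 * Real.exp (a * Real.exp (ρ * ξ)))
          * Real.sqrt (Real.exp (2*x*ξ - a * Real.exp (ρ*ξ)))
          = ‖ψ ξ‖ * Real.exp (x*ξ) := by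
        have hsq : ‖ψ ξ‖ ^ 2 * Real.exp (a * Real.exp (ρ * ξ))
            * Real.exp (2*x*ξ - a * Real.exp (ρ*ξ))
            = (‖ψ ξ‖ * Real.exp (x*ξ)) ^ 2 := by
          have e : a*Real.exp (ρ*ξ) + (2*x*ξ - a*Real.exp (ρ*ξ)) = x*ξ + x*ξ := by ring
          rw [mul_assoc, ← Real.exp_add, e, mul_pow, pow_two (Real.exp (x*ξ)), ← Real.exp_add]
        rw [← Real.sqrt_mul (by positivity), hsq]
        exact Real.sqrt_sq (by positivity)
      rw [← hprod]
      exact sqrt_amgm ht (by positivity) (by positivity)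
    have hDint : Integrable (fun ξ : ℝ =>
        (t * (‖ψ ξ‖ ^ 2 * Real.exp (a * Real.exp (ρ * ξ)))
          + Real.exp (2*x*ξ - a * Real.exp (ρ*ξ)) / t) / 2) :=
      (((hψint.const_mul t).add (hBint.div_const t)).div_const 2)
    have h2 : ∫ ξ : ℝ, ‖ψ ξ‖ * Real.exp (x*ξ) ≤ (t * A + B / t) / 2 := by
      refine le_trans (integral_mono_of_nonneg
        (Filter.Eventually.of_forall fun ξ => by positivity) hDint
        (Filter.Eventually.of_forall hpt)) (le_of_eq ?_)
      rw [integral_div, integral_add (hψint.const_mul t) (hBint.div_const t),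
        integral_const_mul, integral_div]
    have hsA2 : Real.sqrt A * Real.sqrt A = A := Real.mul_self_sqrt hA.le
    have hsB2 : Real.sqrt B * Real.sqrt B = B := Real.mul_self_sqrt hBpos.le
    have h3 : (t * A + B / t) / 2 = Real.sqrt A * Real.sqrt B := by
      have hsA : (0:ℝ) < Real.sqrt A := Real.sqrt_pos.mpr hA
      have hsB : (0:ℝ) < Real.sqrt B := Real.sqrt_pos.mpr hBpos
      rw [ht_def]
      field_simp
      nlinarith [hsA2, hsB2]
    have hIB : ‖∫ ξ : ℝ, ψ ξ * Complex.exp (z * (ξ:ℂ))‖ ≤ Real.sqrt A * Real.sqrt B :=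
      h1.trans (h2.trans_eq h3)
    -- Step 3 : bound √B
    have hBle : B ≤ (2/a) ^ (2*(x/ρ)) * Real.sqrt (x/ρ) * (Real.Gamma (x/ρ)) ^ 2 / ρ := by
      rw [hBeq, h2s]
      have hdr : (2/a) ^ (2*(x/ρ)) = (2:ℝ) ^ (2*(x/ρ)) / a ^ (2*(x/ρ)) :=
        Real.div_rpow (by norm_num) ha.le _
      rw [hdr]
      calc Real.Gamma (2*(x/ρ)) / (ρ * a ^ (2*(x/ρ)))
          ≤ ((2:ℝ) ^ (2*(x/ρ)) * Real.sqrt (x/ρ) * (Real.Gamma (x/ρ)) ^ 2)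
              / (ρ * a ^ (2*(x/ρ))) := by
            gcongr
            exact dup_bound hs
        _ = (2:ℝ) ^ (2*(x/ρ)) / a ^ (2*(x/ρ)) * Real.sqrt (x/ρ)
              * (Real.Gamma (x/ρ)) ^ 2 / ρ := by
            field_simp
    have hsq1 : (2/a) ^ (2*(x/ρ)) = ((2/a) ^ (x/ρ)) ^ 2 := by
      rw [← Real.rpow_natCast ((2/a) ^ (x/ρ)) 2, ← Real.rpow_mul (by positivity)]
      norm_num
      ring_nf
    have hsqD : Real.sqrt ((2/a) ^ (2*(x/ρ)) * Real.sqrt (x/ρ) * (Real.Gamma (x/ρ)) ^ 2 / ρ)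
        = (2/a) ^ (x/ρ) * (x/ρ) ^ ((1:ℝ)/4) * Real.Gamma (x/ρ) / Real.sqrt ρ := by
      have h14 : Real.sqrt (Real.sqrt (x/ρ)) = (x/ρ) ^ ((1:ℝ)/4) := by
        rw [Real.sqrt_eq_rpow, Real.sqrt_eq_rpow, ← Real.rpow_mul hs.le]
        norm_num
      rw [Real.sqrt_div (by positivity), Real.sqrt_mul (by positivity),
        Real.sqrt_mul (by positivity), hsq1, Real.sqrt_sq (by positivity),
        Real.sqrt_sq hΓ.le, h14]
    have hsB : Real.sqrt B
        ≤ (2/a) ^ (x/ρ) * (x/ρ) ^ ((1:ℝ)/4) * Real.Gamma (x/ρ) / Real.sqrt ρ :=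
      (Real.sqrt_le_sqrt hBle).trans_eq hsqD
    have hdiv4 : (x/ρ) ^ ((1:ℝ)/4) = x ^ ((1:ℝ)/4) / ρ ^ ((1:ℝ)/4) :=
      Real.div_rpow (le_of_lt hz) hρ.le _
    have hsm : ‖(Real.sqrt (2 * Real.pi))⁻¹ • ∫ ξ : ℝ, ψ ξ * Complex.exp (z * (ξ:ℂ))‖
        = (Real.sqrt (2 * Real.pi))⁻¹ * ‖∫ ξ : ℝ, ψ ξ * Complex.exp (z * (ξ:ℂ))‖ := by
      rw [norm_smul, Real.norm_eq_abs, _root_.abs_of_nonneg (by positivity : (0:ℝ) ≤ (Real.sqrt (2 * Real.pi))⁻¹)]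
    rw [hsm]
    calc (Real.sqrt (2 * Real.pi))⁻¹ * ‖∫ ξ : ℝ, ψ ξ * Complex.exp (z * (ξ:ℂ))‖
        ≤ (Real.sqrt (2 * Real.pi))⁻¹ * (Real.sqrt A * Real.sqrt B) := by
          exact mul_le_mul_of_nonneg_left hIB (by positivity)
      _ ≤ (Real.sqrt (2 * Real.pi))⁻¹ * (Real.sqrt A
            * ((2/a) ^ (x/ρ) * (x/ρ) ^ ((1:ℝ)/4) * Real.Gamma (x/ρ) / Real.sqrt ρ)) := by
          refine mul_le_mul_of_nonneg_left ?_ (by positivity)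
          exact mul_le_mul_of_nonneg_left hsB (Real.sqrt_nonneg A)
      _ = (Real.sqrt (2 * Real.pi))⁻¹ * ((Real.sqrt ρ)⁻¹ * (ρ ^ ((1:ℝ)/4))⁻¹)
            * Real.sqrt A * x ^ ((1:ℝ)/4) * (2/a) ^ (x/ρ) * Real.Gamma (x/ρ) := by
          rw [hdiv4]
          ring
end

section
/- Let a, ρ > 0 and let φ : (0,∞) → ℂ be measurable with ∫_0^∞ |φ(ξ)|² e^{a ξ^ρ} ξ^{-1} dξ < ∞. Then for every z ∈ ℂ with x = Re z > 0, the Mellin transform Mφ(z) = (2π)^{-1/2} ∫_0^∞ φ(t) t^{z-1} dt satisfies |Mφ(z)| ≤ (2πρ)^{-1/2}·(∫_0^∞ |φ(ξ)|² e^{a ξ^ρ} ξ^{-1} dξ)^{1/2}·a^{-x/ρ}·Γ(2x/ρ)^{1/2}, where Γ is the real Gamma function. -/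
open MeasureTheory Complex

/-- Pointwise bound for the Mellin transform of `φ ∈ L²((0,∞), e^{aξ^ρ} dξ/ξ)`:
`|Mφ(z)| ≤ (2πρ)^{-1/2} ‖φ‖ a^{-x/ρ} Γ(2x/ρ)^{1/2}` for `x = Re z > 0`. -/
theorem stmt_6 (a ρ : ℝ) (ha : 0 < a) (hρ : 0 < ρ) (φ : ℝ → ℂ)
    (hmeas : Measurable φ)
    (hφ : IntegrableOn (fun ξ : ℝ => ‖φ ξ‖ ^ 2 * Real.exp (a * ξ ^ ρ) / ξ) (Set.Ioi 0)) :
    ∀ z : ℂ, 0 < z.re →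
      ‖(Real.sqrt (2 * Real.pi))⁻¹ • ∫ t in Set.Ioi (0 : ℝ), φ t * (t : ℂ) ^ (z - 1)‖
        ≤ (Real.sqrt (2 * Real.pi * ρ))⁻¹
          * Real.sqrt (∫ ξ in Set.Ioi (0 : ℝ), ‖φ ξ‖ ^ 2 * Real.exp (a * ξ ^ ρ) / ξ)
          * Real.exp (-(z.re / ρ) * Real.log a)
          * Real.sqrt (Real.Gamma (2 * z.re / ρ)) := by
  intro z hz
  set x := z.re with hxdef
  have hx2 : (0:ℝ) < 2 * x := by linarith
  have hx2ρ : (0:ℝ) < 2 * x / ρ := div_pos hx2 hρ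
  set f : ℝ → ℝ := fun t => ‖φ t‖ * Real.exp (a * t ^ ρ / 2) / Real.sqrt t with hfdef
  set g : ℝ → ℝ := fun t => Real.exp (-(a / 2) * t ^ ρ) * t ^ (x - 1 / 2) with hgdef
  have hf_meas : Measurable f := by unfold f; fun_prop
  have hg_meas : Measurable g := by unfold g; fun_prop
  -- f² equals the weight integrand on (0,∞)
  have hf_sq : ∀ t ∈ Set.Ioi (0:ℝ),
      (fun ξ : ℝ => ‖φ ξ‖ ^ 2 * Real.exp (a * ξ ^ ρ) / ξ) t = f t ^ 2 := by
    intro t ht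
    have ht' : (0:ℝ) < t := ht
    have he : Real.exp (a * t ^ ρ / 2) ^ 2 = Real.exp (a * t ^ ρ) := by
      rw [pow_two, ← Real.exp_add, show a * t ^ ρ / 2 + a * t ^ ρ / 2 = a * t ^ ρ by ring]
    simp only [hfdef, div_pow, mul_pow, Real.sq_sqrt ht'.le, he]
  have hf_sq_int : Integrable (fun t => f t ^ 2) (volume.restrict (Set.Ioi 0)) :=
    hφ.congr_fun hf_sq measurableSet_Ioi
  have hf_mem : MemLp f 2 (volume.restrict (Set.Ioi 0)) :=
    (memLp_two_iff_integrable_sq hf_meas.aestronglyMeasurable).mpr hf_sq_int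
  -- g² computations
  have hg2_eq : ∀ t ∈ Set.Ioi (0:ℝ),
      (fun t : ℝ => t ^ (2 * x - 1) * Real.exp (-a * t ^ ρ)) t = g t ^ 2 := by
    intro t ht
    have ht' : (0:ℝ) < t := ht
    have h1 : g t ^ 2
        = Real.exp (-(a / 2) * t ^ ρ + -(a / 2) * t ^ ρ) * t ^ (x - 1 / 2 + (x - 1 / 2)) := by
      rw [Real.exp_add, Real.rpow_add ht']
      simp only [hgdef]
      ring
    rw [h1, show -(a / 2) * t ^ ρ + -(a / 2) * t ^ ρ = -a * t ^ ρ by ring,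
      show x - 1 / 2 + (x - 1 / 2) = 2 * x - 1 by ring]
    ring
  have hg2_int : IntegrableOn (fun t : ℝ => t ^ (2 * x - 1) * Real.exp (-a * t ^ ρ))
      (Set.Ioi 0) := by
    have h0 : IntegrableOn (fun u : ℝ => u ^ (2 * x / ρ - 1) * Real.exp (-a * u ^ (1:ℝ)))
        (Set.Ioi 0) :=
      integrableOn_rpow_mul_exp_neg_mul_rpow (by linarith) zero_lt_one ha
    have h0' : IntegrableOn (fun u : ℝ => u ^ (2 * x / ρ - 1) * Real.exp (-a * u))
        (Set.Ioi 0) := by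
      refine h0.congr_fun (fun u hu => ?_) measurableSet_Ioi
      simp only [Real.rpow_one]
    have h1 := (integrableOn_Ioi_comp_rpow_iff'
      (fun u : ℝ => u ^ (2 * x / ρ - 1) * Real.exp (-a * u)) hρ.ne').mpr h0'
    refine h1.congr_fun (fun t ht => ?_) measurableSet_Ioi
    have ht' : (0:ℝ) < t := ht
    simp only [smul_eq_mul]
    rw [← Real.rpow_mul ht'.le, ← mul_assoc, ← Real.rpow_add ht',
      show ρ - 1 + ρ * (2 * x / ρ - 1) = 2 * x - 1 by field_simp; ring]
  have hg_sq_int : Integrable (fun t => g t ^ 2) (volume.restrict (Set.Ioi 0)) :=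
    hg2_int.congr_fun hg2_eq measurableSet_Ioi
  have hg_mem : MemLp g 2 (volume.restrict (Set.Ioi 0)) :=
    (memLp_two_iff_integrable_sq hg_meas.aestronglyMeasurable).mpr hg_sq_int
  have hq1 : -1 < 2 * x - 1 := by linarith
  have hg2_val : ∫ t in Set.Ioi (0:ℝ), g t ^ 2
      = a ^ (-(2 * x) / ρ) * (1 / ρ) * Real.Gamma (2 * x / ρ) := by
    rw [← setIntegral_congr_fun measurableSet_Ioi hg2_eq,
      integral_rpow_mul_exp_neg_mul_rpow hρ hq1 ha, show 2 * x - 1 + 1 = 2 * x by ring]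
  -- Hölder
  have hconj : Real.HolderConjugate 2 2 := Real.holderConjugate_iff.mpr ⟨one_lt_two, by norm_num⟩
  have hof : ENNReal.ofReal (2:ℝ) = (2 : ENNReal) := by norm_num
  have hf_nonneg : 0 ≤ᵐ[volume.restrict (Set.Ioi 0)] f := Filter.Eventually.of_forall fun t => by
    simp only [hfdef]; positivity
  have hg_nonneg : 0 ≤ᵐ[volume.restrict (Set.Ioi 0)] g := by
    filter_upwards [ae_restrict_mem measurableSet_Ioi] with t ht
    exact mul_nonneg (Real.exp_nonneg _) (Real.rpow_nonneg (le_of_lt ht) _)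
  have holder := integral_mul_le_Lp_mul_Lq_of_nonneg
    (μ := volume.restrict (Set.Ioi 0)) hconj hf_nonneg hg_nonneg
    (hof ▸ hf_mem) (hof ▸ hg_mem)
  have hpow2 : ∀ y : ℝ, y ^ (2:ℝ) = y ^ 2 := fun y => by
    rw [show (2:ℝ) = ((2:ℕ):ℝ) by norm_num, Real.rpow_natCast]
  simp only [hpow2] at holder
  -- the norm of the integrand equals f * g on (0,∞)
  have hnorm_eq : ∀ t ∈ Set.Ioi (0:ℝ),
      (fun t : ℝ => ‖φ t * (t : ℂ) ^ (z - 1)‖) t = f t * g t := by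
    intro t ht
    have ht' : (0:ℝ) < t := ht
    have hcpow : ‖((t:ℝ) : ℂ) ^ (z - 1)‖ = t ^ (x - 1) := by
      rw [Complex.norm_cpow_eq_rpow_re_of_pos ht', Complex.sub_re,
        Complex.one_re, hxdef]
    simp only [norm_mul, hcpow, hfdef, hgdef, Real.sqrt_eq_rpow]
    rw [show ‖φ t‖ * Real.exp (a * t ^ ρ / 2) / t ^ (1/2 : ℝ)
        * (Real.exp (-(a / 2) * t ^ ρ) * t ^ (x - 1 / 2))
        = ‖φ t‖ * (Real.exp (a * t ^ ρ / 2) * Real.exp (-(a / 2) * t ^ ρ))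
          * (t ^ (x - 1/2 : ℝ) / t ^ (1/2 : ℝ)) by ring,
      ← Real.exp_add, ← Real.rpow_sub ht',
      show a * t ^ ρ / 2 + -(a / 2) * t ^ ρ = 0 by ring, Real.exp_zero,
      show x - 1 / 2 - 1 / 2 = x - 1 by ring, mul_one]
  have hA_eq : ∫ t in Set.Ioi (0:ℝ), f t ^ 2
      = ∫ ξ in Set.Ioi (0:ℝ), ‖φ ξ‖ ^ 2 * Real.exp (a * ξ ^ ρ) / ξ :=
    (setIntegral_congr_fun measurableSet_Ioi hf_sq).symm
  have hA0 : 0 ≤ ∫ ξ in Set.Ioi (0:ℝ), ‖φ ξ‖ ^ 2 * Real.exp (a * ξ ^ ρ) / ξ :=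
    setIntegral_nonneg measurableSet_Ioi fun ξ hξ => by
      have : (0:ℝ) < ξ := hξ; positivity
  set A : ℝ := ∫ ξ in Set.Ioi (0:ℝ), ‖φ ξ‖ ^ 2 * Real.exp (a * ξ ^ ρ) / ξ with hAdef
  have step1 : ‖∫ t in Set.Ioi (0:ℝ), φ t * (t : ℂ) ^ (z - 1)‖
      ≤ ∫ t in Set.Ioi (0:ℝ), f t * g t := by
    refine (norm_integral_le_integral_norm _).trans_eq ?_
    exact setIntegral_congr_fun measurableSet_Ioi hnorm_eq
  have step2 : ∫ t in Set.Ioi (0:ℝ), f t * g t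
      ≤ Real.sqrt A * Real.sqrt (a ^ (-(2 * x) / ρ) * (1 / ρ) * Real.Gamma (2 * x / ρ)) := by
    refine holder.trans_eq ?_
    rw [hA_eq, hg2_val, ← Real.sqrt_eq_rpow, ← Real.sqrt_eq_rpow]
  have hΓ0 : 0 ≤ Real.Gamma (2 * x / ρ) := (Real.Gamma_pos_of_pos hx2ρ).le
  have hrpow0 : 0 ≤ a ^ (-(2 * x) / ρ) := Real.rpow_nonneg ha.le _
  have hexp_sq : a ^ (-(2 * x) / ρ) = Real.exp (-(x / ρ) * Real.log a) ^ 2 := by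
    rw [← Real.exp_nat_mul, Real.rpow_def_of_pos ha]
    congr 1
    push_cast
    ring
  have key : (Real.sqrt (2 * Real.pi))⁻¹
      * (Real.sqrt A * Real.sqrt (a ^ (-(2 * x) / ρ) * (1 / ρ) * Real.Gamma (2 * x / ρ)))
      = (Real.sqrt (2 * Real.pi * ρ))⁻¹ * Real.sqrt A
        * Real.exp (-(x / ρ) * Real.log a) * Real.sqrt (Real.Gamma (2 * x / ρ)) := by
    rw [Real.sqrt_mul (by positivity) (Real.Gamma (2 * x / ρ)),
      Real.sqrt_mul hrpow0 (1 / ρ), hexp_sq,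
      Real.sqrt_sq (Real.exp_nonneg _),
      Real.sqrt_mul (by positivity : (0:ℝ) ≤ 2 * Real.pi) ρ, mul_inv,
      one_div, Real.sqrt_inv]
    ring
  calc ‖(Real.sqrt (2 * Real.pi))⁻¹ • ∫ t in Set.Ioi (0:ℝ), φ t * (t : ℂ) ^ (z - 1)‖
      = (Real.sqrt (2 * Real.pi))⁻¹ * ‖∫ t in Set.Ioi (0:ℝ), φ t * (t : ℂ) ^ (z - 1)‖ := by
        rw [norm_smul, Real.norm_eq_abs,
          _root_.abs_of_nonneg (inv_nonneg.mpr (Real.sqrt_nonneg (2 * Real.pi)))]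
    _ ≤ (Real.sqrt (2 * Real.pi))⁻¹
        * (Real.sqrt A * Real.sqrt (a ^ (-(2 * x) / ρ) * (1 / ρ) * Real.Gamma (2 * x / ρ))) :=
        mul_le_mul_of_nonneg_left (step1.trans step2) (by positivity)
    _ = _ := key
end

section
/- Let a, ρ > 0, let p > 2, and let w ∈ ℂ with Re w > 0. Define K(z,w) = (2πρ)^{-1}·exp(-((z + conj(w))/ρ)·log a)·Γ((z + conj(w))/ρ), where Γ is the complex Gamma function. Then Σ_{n=0}^∞ (aⁿ/n!) ∫_ℝ |K(ρn/2 + iy, w)|^p dy = +∞; that is, the reproducing kernel K(·,w) of M²_{a,ρ} does not belong to L^p of the measure ω_{a,ρ} = Σ_{n≥0} (aⁿ/n!) δ_{ρn/2} ⊗ dy. -/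
set_option maxHeartbeats 1000000

open MeasureTheory Complex Set Filter
open scoped ENNReal NNReal

open MeasureTheory Complex Set Filter
open scoped ENNReal NNReal

lemma integral_exp_neg_half (B : ℝ) :
    ∫ x in Set.Ioi B, Real.exp (-(1/2) * x) = 2 * Real.exp (-(1/2) * B) := by
  have hderiv : ∀ x ∈ Set.Ici B, HasDerivAt (fun x => -2 * Real.exp (-(1/2) * x))
      (Real.exp (-(1/2) * x)) x := by
    intro x _
    have h1 : HasDerivAt (fun x : ℝ => -(1/2) * x) (-(1/2)) x := by
      simpa using (hasDerivAt_id x).const_mul (-(1/2) : ℝ)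
    have h2 := (h1.exp).const_mul (-2 : ℝ)
    exact h2.congr_deriv (by ring)
  have hint : IntegrableOn (fun x => Real.exp (-(1/2) * x)) (Set.Ioi B) :=
    exp_neg_integrableOn_Ioi B (by norm_num)
  have hlim : Tendsto (fun x => -2 * Real.exp (-(1/2) * x)) atTop (nhds 0) := by
    have : Tendsto (fun x : ℝ => -(1/2) * x) atTop atBot :=
      tendsto_id.const_mul_atTop_of_neg (by norm_num)
    have := (Real.tendsto_exp_atBot.comp this).const_mul (-2 : ℝ)
    simpa using this
  have := integral_Ioi_of_hasDerivAt_of_tendsto' hderiv hint hlim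
  rw [this]; ring

lemma re_gamma_integrand (s : ℂ) (x : ℝ) (hx : 0 < x) :
    ((↑(Real.exp (-x)) * (↑x : ℂ) ^ (s - 1)).re)
      = Real.exp (-x) * (x ^ (s.re - 1) * Real.cos (s.im * Real.log x)) := by
  have hx0 : (x : ℂ) ≠ 0 := Complex.ofReal_ne_zero.mpr hx.ne'
  rw [Complex.cpow_def_of_ne_zero hx0, ← Complex.ofReal_log hx.le]
  have hre : ((Real.log x : ℂ) * (s - 1)).re = Real.log x * (s.re - 1) := by simp
  have him : ((Real.log x : ℂ) * (s - 1)).im = Real.log x * s.im := by simp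
  rw [Complex.mul_re, Complex.ofReal_re, Complex.ofReal_im, Complex.exp_re, hre, him]
  rw [Real.rpow_def_of_pos hx, mul_comm (Real.log x) s.im]
  ring_nf

lemma gamma_re_lb (s : ℂ) (hσ : 1 ≤ s.re) (hτ : |s.im| * (s.re + 2) ≤ 1)
    (hB16 : 16 * s.re ^ 2 ≤ Real.exp (s.re + 2)) :
    1/2 * (Real.exp (-(s.re + 1)) * s.re ^ (s.re - 1)) - 2 ≤ (Complex.Gamma s).re := by
  set σ := s.re with hσdef
  set τ := s.im with hτdef
  have hσ0 : (0:ℝ) < σ := lt_of_lt_of_le one_pos hσ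
  set A := Real.exp (-(σ + 2)) with hAdef
  set B := Real.exp (σ + 2) with hBdef
  have hA0 : 0 < A := Real.exp_pos _
  have hA1 : A ≤ 1 := Real.exp_le_one_iff.mpr (by linarith)
  have hAσ : A ≤ σ := hA1.trans hσ
  have hB1 : σ + 1 ≤ B := by
    have := Real.add_one_le_exp (σ + 2); simp only [hBdef]; linarith
  have hB4 : 4 ≤ B := by
    have h3 : Real.exp 3 ≤ B := Real.exp_le_exp.mpr (by linarith)
    have := Real.add_one_le_exp (3:ℝ); linarith
  set f : ℝ → ℝ := fun x => Real.exp (-x) * x ^ (σ - 1) with hfdef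
  set g : ℝ → ℝ := fun x => Real.exp (-x) * (x ^ (σ - 1) * Real.cos (τ * Real.log x)) with hgdef
  have hf_int : IntegrableOn f (Ioi 0) := Real.GammaIntegral_convergent hσ0
  have hf_nonneg : ∀ x ∈ Ioi (0:ℝ), 0 ≤ f x := fun x hx =>
    mul_nonneg (Real.exp_pos _).le (Real.rpow_nonneg (le_of_lt hx) _)
  have hrpow_meas : Measurable (fun x : ℝ => x ^ (σ - 1)) := by measurability
  have hg_meas : Measurable g :=
    (Real.measurable_exp.comp measurable_neg).mul
      (hrpow_meas.mul (Real.measurable_cos.comp (Real.measurable_log.const_mul τ)))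
  have hg_bound : ∀ x ∈ Ioi (0:ℝ), |g x| ≤ f x := by
    intro x hx
    have hx0 : (0:ℝ) < x := hx
    have h1 : |g x| = Real.exp (-x) * (x ^ (σ - 1) * |Real.cos (τ * Real.log x)|) := by
      rw [hgdef]
      rw [abs_mul, abs_mul, abs_of_pos (Real.exp_pos _),
        _root_.abs_of_nonneg (Real.rpow_nonneg hx0.le _)]
    rw [h1]
    have h2 : |Real.cos (τ * Real.log x)| ≤ 1 := Real.abs_cos_le_one _
    have h3 : x ^ (σ - 1) * |Real.cos (τ * Real.log x)| ≤ x ^ (σ - 1) * 1 :=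
      mul_le_mul_of_nonneg_left h2 (Real.rpow_nonneg hx0.le _)
    calc Real.exp (-x) * (x ^ (σ - 1) * |Real.cos (τ * Real.log x)|)
        ≤ Real.exp (-x) * (x ^ (σ - 1) * 1) :=
          mul_le_mul_of_nonneg_left h3 (Real.exp_pos _).le
      _ = f x := by rw [hfdef]; ring
  have hg_int : IntegrableOn g (Ioi 0) := by
    refine Integrable.mono' hf_int hg_meas.aestronglyMeasurable ?_
    rw [ae_restrict_iff' measurableSet_Ioi]
    exact ae_of_all _ fun x hx => by rw [Real.norm_eq_abs]; exact hg_bound x hx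
  have hspos : 0 < s.re := hσ0
  have hΓ : (Complex.Gamma s).re = ∫ x in Ioi (0:ℝ), g x := by
    rw [Complex.Gamma_eq_integral hspos, Complex.GammaIntegral, ← RCLike.re_eq_complex_re,
      ← integral_re (Complex.GammaIntegral_convergent hspos)]
    refine setIntegral_congr_fun measurableSet_Ioi fun x hx => ?_
    rw [RCLike.re_eq_complex_re]
    exact re_gamma_integrand s x hx
  have hsub : Icc A B ⊆ Ioi (0:ℝ) := fun x hx => lt_of_lt_of_le hA0 hx.1
  have hsplit : ∫ x in Ioi (0:ℝ), g x =
      (∫ x in Icc A B, g x) + ∫ x in Ioi 0 \ Icc A B, g x := by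
    rw [← setIntegral_union Set.disjoint_sdiff_right
      (measurableSet_Ioi.diff measurableSet_Icc)
      (hg_int.mono_set hsub) (hg_int.mono_set Set.diff_subset),
      Set.union_diff_cancel hsub]
  -- good part
  have hcos : ∀ x ∈ Icc A B, 1/2 * f x ≤ g x := by
    intro x hx
    have hx0 : 0 < x := lt_of_lt_of_le hA0 hx.1
    have hlog : |Real.log x| ≤ σ + 2 := by
      rw [abs_le]
      constructor
      · have := Real.log_le_log hA0 hx.1
        rwa [hAdef, Real.log_exp] at this
      · have := Real.log_le_log hx0 hx.2
        rwa [hBdef, Real.log_exp] at this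
    have h1 : |τ * Real.log x| ≤ 1 := by
      rw [abs_mul]
      calc |τ| * |Real.log x| ≤ |τ| * (σ + 2) :=
            mul_le_mul_of_nonneg_left hlog (abs_nonneg _)
        _ ≤ 1 := hτ
    have hcos2 : 1/2 ≤ Real.cos (τ * Real.log x) := by
      have hb := Real.one_sub_sq_div_two_le_cos (x := τ * Real.log x)
      have hsq : (τ * Real.log x) ^ 2 ≤ 1 := by
        rw [← _root_.sq_abs]; nlinarith [abs_nonneg (τ * Real.log x)]
      linarith
    have hxp : 0 ≤ x ^ (σ - 1) := Real.rpow_nonneg hx0.le _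
    have : x ^ (σ - 1) * (1/2) ≤ x ^ (σ - 1) * Real.cos (τ * Real.log x) :=
      mul_le_mul_of_nonneg_left hcos2 hxp
    calc 1/2 * f x = Real.exp (-x) * (x ^ (σ - 1) * (1/2)) := by rw [hfdef]; ring
      _ ≤ Real.exp (-x) * (x ^ (σ - 1) * Real.cos (τ * Real.log x)) :=
          mul_le_mul_of_nonneg_left this (Real.exp_pos _).le
      _ = g x := rfl
  have hsub2 : Icc σ (σ + 1) ⊆ Icc A B := fun x hx =>
    ⟨hAσ.trans hx.1, hx.2.trans hB1⟩
  have hgood : 1/2 * (Real.exp (-(σ + 1)) * σ ^ (σ - 1)) ≤ ∫ x in Icc A B, g x := by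
    have hint_half : IntegrableOn (fun x => 1/2 * f x) (Icc A B) :=
      (hf_int.mono_set hsub).const_mul _
    have step1 : ∫ x in Icc σ (σ + 1), (1/2 * (Real.exp (-(σ + 1)) * σ ^ (σ - 1))) ≤
        ∫ x in Icc σ (σ + 1), 1/2 * f x := by
      refine setIntegral_mono_on (integrableOn_const (by
        rw [Real.volume_Icc]; exact ENNReal.ofReal_ne_top))
        (hint_half.mono_set hsub2) measurableSet_Icc ?_
      intro x hx
      have h1 : Real.exp (-(σ + 1)) ≤ Real.exp (-x) := Real.exp_le_exp.mpr (by linarith [hx.2])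
      have h2 : σ ^ (σ - 1) ≤ x ^ (σ - 1) := Real.rpow_le_rpow hσ0.le hx.1 (by linarith)
      have := mul_le_mul h1 h2 (Real.rpow_nonneg hσ0.le _) (Real.exp_pos _).le
      simp only [hfdef]; linarith
    have step0 : ∫ x in Icc σ (σ + 1), (1/2 * (Real.exp (-(σ + 1)) * σ ^ (σ - 1))) =
        1/2 * (Real.exp (-(σ + 1)) * σ ^ (σ - 1)) := by
      rw [setIntegral_const, Real.volume_real_Icc]
      norm_num
    have step2 : ∫ x in Icc σ (σ + 1), 1/2 * f x ≤ ∫ x in Icc A B, 1/2 * f x := by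
      refine setIntegral_mono_set hint_half
        ((ae_restrict_iff' measurableSet_Icc).mpr (ae_of_all _ fun x hx => by
          have := hf_nonneg x (hsub hx); positivity))
        (HasSubset.Subset.eventuallyLE hsub2)
    have step3 : ∫ x in Icc A B, 1/2 * f x ≤ ∫ x in Icc A B, g x :=
      setIntegral_mono_on hint_half (hg_int.mono_set hsub) measurableSet_Icc hcos
    linarith
  -- bad part
  have hbad : |∫ x in Ioi 0 \ Icc A B, g x| ≤ 2 := by
    have hbadsub : Ioi (0:ℝ) \ Icc A B ⊆ Ioi (0:ℝ) := Set.diff_subset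
    have h1 : |∫ x in Ioi 0 \ Icc A B, g x| ≤ ∫ x in Ioi 0 \ Icc A B, |g x| := by
      simpa [Real.norm_eq_abs] using
        norm_integral_le_integral_norm (μ := volume.restrict (Ioi 0 \ Icc A B)) g
    have h2 : ∫ x in Ioi 0 \ Icc A B, |g x| ≤ ∫ x in Ioi 0 \ Icc A B, f x := by
      refine setIntegral_mono_on (MeasureTheory.IntegrableOn.mono_set hg_int.abs hbadsub)
        (hf_int.mono_set hbadsub) (measurableSet_Ioi.diff measurableSet_Icc) ?_
      exact fun x hx => hg_bound x hx.1
    have hsub3 : Ioi (0:ℝ) \ Icc A B ⊆ Ioc 0 A ∪ Ioi B := by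
      intro x hx
      rcases hx with ⟨hx1, hx2⟩
      simp only [Set.mem_Icc, not_and_or, not_le] at hx2
      rcases hx2 with h | h
      · exact Or.inl ⟨hx1, h.le⟩
      · exact Or.inr h
    have hsub4 : Ioc (0:ℝ) A ∪ Ioi B ⊆ Ioi 0 := by
      intro x hx
      rcases hx with h | h
      · exact h.1
      · exact lt_trans (by linarith : (0:ℝ) < B) h
    have h3 : ∫ x in Ioi 0 \ Icc A B, f x ≤ ∫ x in Ioc 0 A ∪ Ioi B, f x := by
      refine setIntegral_mono_set (hf_int.mono_set hsub4)
        ((ae_restrict_iff' ((measurableSet_Ioc.union measurableSet_Ioi))).mpr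
          (ae_of_all _ fun x hx => hf_nonneg x (hsub4 hx)))
        (HasSubset.Subset.eventuallyLE hsub3)
    have h4 : ∫ x in Ioc (0:ℝ) A ∪ Ioi B, f x =
        (∫ x in Ioc (0:ℝ) A, f x) + ∫ x in Ioi B, f x := by
      refine setIntegral_union ?_ measurableSet_Ioi
        (hf_int.mono_set (fun x hx => hsub4 (Or.inl hx)))
        (hf_int.mono_set (fun x hx => hsub4 (Or.inr hx)))
      rw [Set.disjoint_left]
      intro x hx hx2
      have : x ≤ A := hx.2
      have : B < x := hx2
      linarith
    have h5 : ∫ x in Ioc (0:ℝ) A, f x ≤ 1 := by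
      have hle : ∀ x ∈ Ioc (0:ℝ) A, f x ≤ 1 := by
        intro x hx
        have hx0 : 0 < x := hx.1
        have hfx : f x ≤ 1 * 1 := by
          refine mul_le_mul ?_ ?_ (Real.rpow_nonneg hx0.le _) zero_le_one
          · exact Real.exp_le_one_iff.mpr (by linarith)
          · exact Real.rpow_le_one hx0.le (hx.2.trans hA1) (by linarith)
        linarith
      calc ∫ x in Ioc (0:ℝ) A, f x ≤ ∫ _x in Ioc (0:ℝ) A, (1:ℝ) := by
            refine setIntegral_mono_on (hf_int.mono_set (fun x hx => hsub4 (Or.inl hx)))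
              (integrableOn_const (by
                rw [Real.volume_Ioc]; exact ENNReal.ofReal_ne_top)) measurableSet_Ioc hle
        _ = A := by
            rw [setIntegral_const, Real.volume_real_Ioc_of_le hA0.le, smul_eq_mul, mul_one]
            ring
        _ ≤ 1 := hA1
    have h6 : ∫ x in Ioi B, f x ≤ 1 := by
      have hle : ∀ x ∈ Ioi B, f x ≤ Real.exp (-(1/2) * x) := by
        intro x hx
        have hxB : B ≤ x := le_of_lt hx
        have hx16 : 16 * σ ^ 2 ≤ x := le_trans hB16 hxB
        have hx0 : 0 < x := lt_of_lt_of_le (by linarith) hxB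
        have hx1 : 1 ≤ x := by nlinarith
        have hsqrt : 4 * σ ≤ Real.sqrt x := by
          rw [show (16:ℝ) * σ ^ 2 = (4 * σ)^2 by ring] at hx16
          have := Real.sqrt_le_sqrt hx16
          rwa [Real.sqrt_sq (by linarith : 0 ≤ 4 * σ)] at this
        have hlog2 : Real.log x ≤ 2 * Real.sqrt x := by
          have h := Real.log_le_sub_one_of_pos (Real.sqrt_pos.mpr hx0)
          have hl : Real.log (Real.sqrt x) = Real.log x / 2 := Real.log_sqrt hx0.le
          rw [hl] at h
          linarith [Real.sqrt_nonneg x]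
        have hkey : (σ - 1) * Real.log x ≤ 1/2 * x := by
          have hlogpos : 0 ≤ Real.log x := Real.log_nonneg hx1
          have h1 : (σ - 1) * Real.log x ≤ σ * Real.log x :=
            mul_le_mul_of_nonneg_right (by linarith) hlogpos
          have h2 : σ * Real.log x ≤ σ * (2 * Real.sqrt x) :=
            mul_le_mul_of_nonneg_left hlog2 hσ0.le
          have h3 : σ * (2 * Real.sqrt x) ≤ 1/2 * x := by
            have hsx : Real.sqrt x * Real.sqrt x = x := Real.mul_self_sqrt hx0.le
            nlinarith [Real.sqrt_nonneg x]
          linarith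
        have : f x = Real.exp (-x + Real.log x * (σ - 1)) := by
          simp only [hfdef]
          rw [Real.rpow_def_of_pos hx0, ← Real.exp_add]
        rw [this]
        apply Real.exp_le_exp.mpr
        nlinarith
      calc ∫ x in Ioi B, f x ≤ ∫ x in Ioi B, Real.exp (-(1/2) * x) := by
            refine setIntegral_mono_on (hf_int.mono_set (fun x hx => hsub4 (Or.inr hx)))
              (exp_neg_integrableOn_Ioi B (by norm_num)) measurableSet_Ioi hle
        _ = 2 * Real.exp (-(1/2) * B) := integral_exp_neg_half B
        _ ≤ 1 := by
            have h1 : Real.exp (-(1/2) * B) ≤ Real.exp (-2) := by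
              apply Real.exp_le_exp.mpr; linarith
            have h2 : Real.exp (-2) ≤ 1/2 := by
              rw [Real.exp_neg]
              have h3 : (2:ℝ) ≤ Real.exp 2 := by
                have := Real.add_one_le_exp (2:ℝ); linarith
              rw [inv_le_comm₀ (by positivity) (by norm_num)]
              linarith
            linarith
    linarith
  have hfinal := abs_le.mp hbad
  rw [hΓ, hsplit]
  linarith


lemma tendsto_lb (p K1 B1 : ℝ) (hp : 2 < p) :
    Tendsto (fun n : ℕ => (p/2 - 1) * ((n:ℝ) * Real.log n) - p * Real.log n + K1 * n + B1)
      atTop atTop := by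
  have hbase : Tendsto (fun n : ℕ => (n:ℝ) * ((p/2 - 1) * Real.log n + (K1 - p)) + B1)
      atTop atTop := by
    apply tendsto_atTop_add_const_right
    apply Filter.Tendsto.atTop_mul_atTop₀ tendsto_natCast_atTop_atTop
    apply tendsto_atTop_add_const_right
    exact (Real.tendsto_log_atTop.comp tendsto_natCast_atTop_atTop).const_mul_atTop
      (by linarith)
  refine tendsto_atTop_mono' _ ?_ hbase
  filter_upwards [eventually_ge_atTop 1] with n hn
  have hn1 : (1:ℝ) ≤ (n:ℝ) := by exact_mod_cast hn
  have hL : Real.log n ≤ (n:ℝ) := by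
    have := Real.log_le_sub_one_of_pos (by linarith : (0:ℝ) < n)
    linarith
  have h1 : p * Real.log n ≤ p * n := mul_le_mul_of_nonneg_left hL (by linarith)
  have hid : (n:ℝ) * ((p/2 - 1) * Real.log n + (K1 - p)) + B1
      = (p/2 - 1) * ((n:ℝ) * Real.log n) - p * (n:ℝ) + K1 * n + B1 := by ring
  rw [hid]
  linarith

lemma ev_exp_sq : ∀ᶠ x : ℝ in atTop, 16 * x ^ 2 ≤ Real.exp (x + 2) := by
  filter_upwards [(Real.tendsto_exp_div_pow_atTop 2).eventually_ge_atTop 16,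
    eventually_gt_atTop 0] with x h1 h2
  have hx2 : (0:ℝ) < x ^ 2 := by positivity
  rw [le_div_iff₀ hx2] at h1
  have : Real.exp x ≤ Real.exp (x + 2) := Real.exp_le_exp.mpr (by linarith)
  linarith

lemma ev_main8 : ∀ᶠ x : ℝ in atTop, 8 ≤ Real.exp (-(x + 1)) * x ^ (x - 1) := by
  filter_upwards [eventually_ge_atTop (Real.exp 2), eventually_ge_atTop 6] with x hx1 hx2
  have hx0 : 0 < x := lt_of_lt_of_le (Real.exp_pos 2) hx1
  have hlog : 2 ≤ Real.log x := (Real.le_log_iff_exp_le hx0).mpr hx1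
  have hrw : x ^ (x - 1) = Real.exp (Real.log x * (x - 1)) := Real.rpow_def_of_pos hx0 _
  rw [hrw, ← Real.exp_add]
  have h8 : (8:ℝ) ≤ Real.exp 3 := by
    have h1 : (2:ℝ) ≤ Real.exp 1 := by have := Real.add_one_le_exp (1:ℝ); linarith
    have h3 : Real.exp 3 = Real.exp 1 * Real.exp 1 * Real.exp 1 := by
      rw [← Real.exp_add, ← Real.exp_add]; norm_num
    nlinarith [Real.exp_pos (1:ℝ)]
  have harg : (3:ℝ) ≤ -(x + 1) + Real.log x * (x - 1) := by nlinarith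
  exact le_trans h8 (Real.exp_le_exp.mpr harg)


/-- For `p > 2`, the reproducing kernel `K(·,w)` of `M²_{a,ρ}` does not belong to
`L^p(ω_{a,ρ})`, where `ω_{a,ρ} = Σₙ (aⁿ/n!) δ_{ρn/2} ⊗ dy`. -/
theorem stmt_7 (a ρ p : ℝ) (ha : 0 < a) (hρ : 0 < ρ) (hp : 2 < p)
    (w : ℂ) (hw : 0 < w.re)
    (K : ℂ → ℂ → ℂ)
    (hK : ∀ z w : ℂ, K z w = ((2 * Real.pi * ρ : ℝ) : ℂ)⁻¹ *
      Complex.exp (-((z + starRingEnd ℂ w) / (ρ : ℂ)) * (Real.log a : ℂ)) *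
      Complex.Gamma ((z + starRingEnd ℂ w) / (ρ : ℂ))) :
    ∑' n : ℕ, ENNReal.ofReal (a ^ n / (Nat.factorial n : ℝ)) *
      ∫⁻ y : ℝ, ENNReal.ofReal
        (‖K (((ρ * n / 2 : ℝ) : ℂ) + y * Complex.I) w‖ ^ p) = ⊤ := by
  by_contra hne
  have h0 := ENNReal.tendsto_atTop_zero_of_tsum_ne_top hne
  have h2πρ : 0 < 2 * Real.pi * ρ := by positivity
  set c := w.re / ρ with hcdef
  have hc : 0 < c := div_pos hw hρ
  set σ : ℕ → ℝ := fun n => (n : ℝ) / 2 + c with hσdef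
  have hσval : ∀ m : ℕ, σ m = (m : ℝ) / 2 + c := fun m => by simp only [hσdef]
  have hσpos : ∀ n, 0 < σ n := fun n => by
    have h1 : (0:ℝ) ≤ (n : ℝ) / 2 := by positivity
    rw [hσval n]; linarith
  have hσtend : Tendsto σ atTop atTop := by
    apply tendsto_atTop_add_const_right
    exact Tendsto.atTop_div_const two_pos tendsto_natCast_atTop_atTop
  set M : ℕ → ℝ := fun n => (2 * Real.pi * ρ)⁻¹ *
    (a ^ (-σ n) * (1/4 * (Real.exp (-(σ n + 1)) * σ n ^ (σ n - 1)))) with hMdef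
  have hMval : ∀ n, M n = (2 * Real.pi * ρ)⁻¹ *
      (a ^ (-σ n) * (1/4 * (Real.exp (-(σ n + 1)) * σ n ^ (σ n - 1)))) := fun n => by
    simp only [hMdef]
  have hMpos : ∀ n, 0 < M n := fun n => by
    rw [hMval n]
    have h1 := Real.rpow_pos_of_pos ha (-σ n)
    have h2 := Real.rpow_pos_of_pos (hσpos n) (σ n - 1)
    positivity
  set u : ℕ → ℝ := fun n => a ^ n / (Nat.factorial n : ℝ) *
    (M n ^ p * (2 * (ρ / (σ n + 2)))) with hudef
  have huval : ∀ n, u n = a ^ n / (Nat.factorial n : ℝ) *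
      (M n ^ p * (2 * (ρ / (σ n + 2)))) := fun n => by simp only [hudef]
  have hupos : ∀ n, 0 < u n := fun n => by
    have hMn := hMpos n
    have hσn := hσpos n
    have hf : (0:ℝ) < (Nat.factorial n : ℝ) := by exact_mod_cast Nat.factorial_pos n
    have hMp := Real.rpow_pos_of_pos hMn p
    rw [huval n]
    positivity
  -- eventually `1 ≤ u n`
  have hev4 : ∀ᶠ n : ℕ in atTop, 1 ≤ u n := by
    set K1 := Real.log a - 1/2 - p/2 * Real.log a - p/2 - p/2 * Real.log 2 with hK1def
    set B1 := Real.log 2 + Real.log ρ - c - 1 +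
      p * (-(Real.log (2 * Real.pi * ρ)) - c * Real.log a + Real.log (1/4) - c - 1 +
        Real.log 2) with hB1def
    have hg := tendsto_lb p K1 B1 hp
    filter_upwards [hg.eventually_ge_atTop 0, eventually_ge_atTop 2] with n hg0 hn2
    have hn2R : (2:ℝ) ≤ (n : ℝ) := by exact_mod_cast hn2
    have hσn := hσpos n
    have hMn := hMpos n
    have hfac : (0:ℝ) < (Nat.factorial n : ℝ) := by exact_mod_cast Nat.factorial_pos n
    have hMp := Real.rpow_pos_of_pos hMn p
    have hlogM : Real.log (M n) = -(Real.log (2 * Real.pi * ρ)) +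
        (-(σ n) * Real.log a + (Real.log (1/4) +
          (-(σ n + 1) + (σ n - 1) * Real.log (σ n)))) := by
      rw [hMval n]
      rw [Real.log_mul (by positivity) (by positivity),
        Real.log_mul (Real.rpow_pos_of_pos ha _).ne' (by positivity),
        Real.log_mul (by norm_num) (by positivity),
        Real.log_mul (Real.exp_pos _).ne' (Real.rpow_pos_of_pos hσn _).ne',
        Real.log_inv, Real.log_rpow ha, Real.log_exp, Real.log_rpow hσn]
      try ring
    have hlogu : Real.log (u n) = ((n : ℝ) * Real.log a - Real.log (Nat.factorial n : ℝ)) +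
        (p * Real.log (M n) + (Real.log 2 + (Real.log ρ - Real.log (σ n + 2)))) := by
      rw [huval n]
      rw [Real.log_mul (by positivity) (by positivity),
        Real.log_div (by positivity) hfac.ne', Real.log_pow,
        Real.log_mul hMp.ne' (by positivity),
        Real.log_mul (by norm_num) (by positivity),
        Real.log_div hρ.ne' (by positivity), Real.log_rpow hMn]
      try ring
    have e1 : Real.log ((Nat.factorial n : ℝ)) ≤ (n : ℝ) * Real.log n := by
      have h1 : ((Nat.factorial n : ℝ)) ≤ ((n:ℝ)) ^ (n : ℕ) := by
        exact_mod_cast Nat.factorial_le_pow n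
      have h2 := Real.log_le_log hfac h1
      rwa [Real.log_pow] at h2
    have e2 : Real.log (σ n + 2) ≤ σ n + 1 := by
      have := Real.log_le_sub_one_of_pos (by linarith : (0:ℝ) < σ n + 2); linarith
    have e3 : ((n:ℝ)/2 - 1) * (Real.log n - Real.log 2) ≤ (σ n - 1) * Real.log (σ n) := by
      have hn0 : (0:ℝ) < (n:ℝ)/2 := by linarith
      have hσ1 : 1 ≤ σ n := by rw [hσval n]; linarith
      have hhalf_le : (n:ℝ)/2 ≤ σ n := by rw [hσval n]; linarith
      have hlog_div : Real.log ((n:ℝ)/2) = Real.log n - Real.log 2 :=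
        Real.log_div (by linarith) two_ne_zero
      have hl1 : Real.log ((n:ℝ)/2) ≤ Real.log (σ n) := Real.log_le_log hn0 hhalf_le
      have hl2 : 0 ≤ Real.log ((n:ℝ)/2) := Real.log_nonneg (by linarith)
      rw [← hlog_div]
      have hb1 : (n:ℝ)/2 - 1 ≤ σ n - 1 := by linarith
      have hb2 : 0 ≤ (n:ℝ)/2 - 1 := by linarith
      exact mul_le_mul hb1 hl1 hl2 (by linarith [hσ1])
    have e3p : p * (-(Real.log (2 * Real.pi * ρ)) +
          (-(σ n) * Real.log a + (Real.log (1/4) +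
            (-(σ n + 1) + ((n:ℝ)/2 - 1) * (Real.log n - Real.log 2))))) ≤
        p * Real.log (M n) := by
      rw [hlogM]
      exact mul_le_mul_of_nonneg_left (by linarith) (by linarith)
    have hid : (p/2 - 1) * ((n:ℝ) * Real.log n) - p * Real.log n + K1 * (n:ℝ) + B1
        = (n:ℝ) * Real.log a - (n:ℝ) * Real.log n + Real.log 2 + Real.log ρ - (σ n + 1) +
          p * (-(Real.log (2 * Real.pi * ρ)) + (-(σ n) * Real.log a + (Real.log (1/4) +
            (-(σ n + 1) + ((n:ℝ)/2 - 1) * (Real.log n - Real.log 2))))) := by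
      rw [hσval n]
      simp only [hK1def, hB1def]
      ring
    have hlog0 : 0 ≤ Real.log (u n) := by
      rw [hlogu]
      rw [hid] at hg0
      clear_value u M σ K1 B1 c
      linarith
    exact (Real.log_nonneg_iff (hupos n)).mp hlog0
  -- eventually `1 ≤ term n`
  have hev : ∀ᶠ n : ℕ in atTop,
      (1:ℝ≥0∞) ≤ ENNReal.ofReal (a ^ n / (Nat.factorial n : ℝ)) *
        ∫⁻ y : ℝ, ENNReal.ofReal
          (‖K (((ρ * n / 2 : ℝ) : ℂ) + y * Complex.I) w‖ ^ p) := by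
    filter_upwards [hσtend.eventually_ge_atTop 1, hσtend.eventually ev_exp_sq,
      hσtend.eventually ev_main8, hev4] with n h1 h2 h3 h4
    set r := ρ / (σ n + 2) with hrdef
    have hσn := hσpos n
    have hr : 0 < r := by rw [hrdef]; positivity
    have hMn := hMpos n
    have hker : ∀ y ∈ Icc (w.im - r) (w.im + r),
        M n ≤ ‖K (((ρ * n / 2 : ℝ) : ℂ) + (y:ℂ) * Complex.I) w‖ := by
      intro y hy
      set s : ℂ := ((((ρ * n / 2 : ℝ) : ℂ) + (y:ℂ) * Complex.I) + starRingEnd ℂ w) / (ρ:ℂ)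
        with hsdef
      have hzre : ((((ρ * n / 2 : ℝ) : ℂ) + (y:ℂ) * Complex.I) + starRingEnd ℂ w).re
          = ρ * n / 2 + w.re := by simp
      have hzim : ((((ρ * n / 2 : ℝ) : ℂ) + (y:ℂ) * Complex.I) + starRingEnd ℂ w).im
          = y - w.im := by simp [sub_eq_add_neg]
      have hsre : s.re = σ n := by
        rw [hsdef, Complex.div_ofReal_re, hzre, hσval n, hcdef]
        field_simp
      have hsim : s.im = (y - w.im) / ρ := by
        rw [hsdef, Complex.div_ofReal_im, hzim]
      have hs1 : 1 ≤ s.re := by rw [hsre]; exact h1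
      have himb : |s.im| * (s.re + 2) ≤ 1 := by
        rw [hsre, hsim, abs_div, abs_of_pos hρ]
        have hyb : |y - w.im| ≤ r := abs_le.mpr ⟨by linarith [hy.1], by linarith [hy.2]⟩
        have h5 : |y - w.im| / ρ * (σ n + 2) ≤ r / ρ * (σ n + 2) := by gcongr
        have h6 : r / ρ * (σ n + 2) = 1 := by
          rw [hrdef]; field_simp
        linarith
      have hB16 : 16 * s.re ^ 2 ≤ Real.exp (s.re + 2) := by rw [hsre]; exact h2
      have hΓ := gamma_re_lb s hs1 himb hB16
      rw [hsre] at hΓ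
      have hq2 : 1/4 * (Real.exp (-(σ n + 1)) * σ n ^ (σ n - 1))
          ≤ ‖Complex.Gamma s‖ := by
        have := Complex.re_le_norm (Complex.Gamma s)
        linarith
      have hexpre : (-s * ((Real.log a : ℝ):ℂ)).re = Real.log a * (-s.re) := by
        simp [Complex.mul_re]
        ring
      have hKnorm : ‖K (((ρ * n / 2 : ℝ) : ℂ) + (y:ℂ) * Complex.I) w‖ =
          (2 * Real.pi * ρ)⁻¹ * (a ^ (-σ n) * ‖Complex.Gamma s‖) := by
        rw [hK, ← hsdef, norm_mul, norm_mul, norm_inv,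
          Complex.norm_real, Real.norm_eq_abs, abs_of_pos h2πρ,
          Complex.norm_exp, hexpre, hsre, ← Real.rpow_def_of_pos ha]
        ring
      rw [hKnorm, hMval n]
      apply mul_le_mul_of_nonneg_left _ (by positivity)
      apply mul_le_mul_of_nonneg_left hq2 (Real.rpow_nonneg ha.le _)
    have hMp : (0:ℝ) < M n ^ p := Real.rpow_pos_of_pos hMn p
    have hIb : ENNReal.ofReal (M n ^ p) * volume (Icc (w.im - r) (w.im + r)) ≤
        ∫⁻ y : ℝ, ENNReal.ofReal
          (‖K (((ρ * n / 2 : ℝ) : ℂ) + y * Complex.I) w‖ ^ p) := by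
      calc ENNReal.ofReal (M n ^ p) * volume (Icc (w.im - r) (w.im + r))
          = ∫⁻ _y in Icc (w.im - r) (w.im + r), ENNReal.ofReal (M n ^ p) := by
            rw [setLIntegral_const]
        _ ≤ ∫⁻ y in Icc (w.im - r) (w.im + r), ENNReal.ofReal
              (‖K (((ρ * n / 2 : ℝ) : ℂ) + y * Complex.I) w‖ ^ p) := by
            refine setLIntegral_mono' measurableSet_Icc fun y hy => ?_
            exact ENNReal.ofReal_le_ofReal
              (Real.rpow_le_rpow hMn.le (hker y hy) (by linarith))
        _ ≤ ∫⁻ y : ℝ, ENNReal.ofReal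
              (‖K (((ρ * n / 2 : ℝ) : ℂ) + y * Complex.I) w‖ ^ p) :=
            setLIntegral_le_lintegral _ _
    have hvol : volume (Icc (w.im - r) (w.im + r)) = ENNReal.ofReal (2 * r) := by
      rw [Real.volume_Icc]
      congr 1
      ring
    have hterm : ENNReal.ofReal (u n) ≤
        ENNReal.ofReal (a ^ n / (Nat.factorial n : ℝ)) *
          ∫⁻ y : ℝ, ENNReal.ofReal
            (‖K (((ρ * n / 2 : ℝ) : ℂ) + y * Complex.I) w‖ ^ p) := by
      have heq : ENNReal.ofReal (u n) = ENNReal.ofReal (a ^ n / (Nat.factorial n : ℝ)) *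
          (ENNReal.ofReal (M n ^ p) * volume (Icc (w.im - r) (w.im + r))) := by
        have hreq : u n = a ^ n / (Nat.factorial n : ℝ) * (M n ^ p * (2 * r)) := by
          rw [huval n, hrdef]
        rw [hvol, ← ENNReal.ofReal_mul hMp.le,
          ← ENNReal.ofReal_mul (by positivity : (0:ℝ) ≤ a ^ n / (Nat.factorial n : ℝ)), hreq]
      rw [heq]
      exact mul_le_mul_right hIb _
    exact le_trans (ENNReal.one_le_ofReal.mpr h4) hterm
  obtain ⟨n, hn1, hn2⟩ := (hev.and (h0.eventually_lt_const (by norm_num : (0:ℝ≥0∞) < 1))).exists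
  exact absurd hn2 (not_lt.mpr hn1)
end

section
/- Let 1 ≤ p < ∞ and let ν be a positive regular Borel measure on [0,∞) with 0 < ν([0,t)) < ∞ for every t > 0 and satisfying the doubling-type condition at the origin: there exists R > 0 such that ν([0,2t)) ≤ R·ν([0,t)) for all t > 0. Then for every compact set E contained in the open right half-plane R = {Re z > 0} there exists a constant C_E > 0 such that every function F holomorphic on R with ‖F‖_{A^p_ω}^p := sup_{r>0} ∫_{[0,∞)} ∫_ℝ |F(x+r+iy)|^p dy dν(x) < ∞ satisfies sup_{λ∈E} |F(λ)| ≤ C_E·‖F‖_{A^p_ω}. -/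
open MeasureTheory Complex
open scoped ENNReal

/-- The `p`-th power of the Zen space norm:
`‖F‖_{A^p_ω}^p = sup_{r>0} ∫_{[0,∞)} ∫_ℝ |F(x+r+iy)|^p dy dν(x)`. -/
noncomputable def zenNormPow (p : ℝ) (ν : Measure ℝ) (F : ℂ → ℂ) : ℝ≥0∞ :=
  ⨆ r ∈ Set.Ioi (0 : ℝ),
    ∫⁻ x : ℝ, (∫⁻ y : ℝ, ENNReal.ofReal (‖F (((x + r : ℝ) : ℂ) + y * Complex.I)‖ ^ p)) ∂ν

private lemma zen_mem_halfplane {z : ℂ} {t : ℝ} (ht : 0 ≤ t) (hlt : t < z.re) {w : ℂ}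
    (hw : w ∈ Metric.closedBall z t) : 0 < w.re := by
  have h2 : ‖w - z‖ ≤ t := by
    simpa [Complex.dist_eq] using hw
  have h := (Complex.abs_re_le_norm (w - z)).trans h2
  rw [Complex.sub_re] at h
  have := abs_le.mp h
  linarith [this.1]

private lemma zen_meanvalue {F : ℂ → ℂ} (hF : DifferentiableOn ℂ F {w : ℂ | 0 < w.re})
    {z : ℂ} {t : ℝ} (ht : 0 < t) (hlt : t < z.re) :
    F z = (2 * (Real.pi : ℂ))⁻¹ * ∫ θ in (-Real.pi)..Real.pi, F (circleMap z t θ) := by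
  have hopen : IsOpen {w : ℂ | 0 < w.re} := isOpen_lt continuous_const Complex.continuous_re
  have hball : Metric.closedBall z t ⊆ {w : ℂ | 0 < w.re} := fun w hw =>
    zen_mem_halfplane ht.le hlt hw
  have hcont : ContinuousOn F (Metric.closedBall z t) := hF.continuousOn.mono hball
  have hdiff : ∀ x ∈ Metric.ball z t \ (∅ : Set ℂ), DifferentiableAt ℂ F x := by
    intro x hx
    have hx' : x ∈ {w : ℂ | 0 < w.re} := hball (Metric.ball_subset_closedBall hx.1)
    exact (hF x hx').differentiableAt (hopen.mem_nhds hx')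
  have key := Complex.two_pi_I_inv_smul_circleIntegral_sub_inv_smul_of_differentiable_on_off_countable
    Set.countable_empty (Metric.mem_ball_self ht) hcont hdiff
  rw [circleIntegral] at key
  simp only [deriv_circleMap, circleMap_sub_center, smul_eq_mul] at key
  have hne : ∀ θ : ℝ, circleMap 0 t θ ≠ 0 := fun θ => circleMap_ne_center ht.ne'
  have heq : ∀ θ ∈ Set.uIcc (0:ℝ) (2*Real.pi),
      circleMap 0 t θ * I * ((circleMap 0 t θ)⁻¹ * F (circleMap z t θ))
        = I * F (circleMap z t θ) := by
    intro θ _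
    field_simp [hne θ]
  rw [intervalIntegral.integral_congr heq, intervalIntegral.integral_const_mul] at key
  have hper : Function.Periodic (fun θ => F (circleMap z t θ)) (2 * Real.pi) :=
    (periodic_circleMap z t).comp F
  have hshift : ∫ θ in (-Real.pi)..Real.pi, F (circleMap z t θ)
      = ∫ θ in (0:ℝ)..(2*Real.pi), F (circleMap z t θ) := by
    have h := hper.intervalIntegral_add_eq (-Real.pi) 0
    rw [zero_add] at h
    rw [show -Real.pi + 2*Real.pi = Real.pi by ring] at h
    exact h
  rw [hshift, ← key, ← mul_assoc]
  congr 1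
  have hI : (I : ℂ) ≠ 0 := Complex.I_ne_zero
  have hπ : (Real.pi : ℂ) ≠ 0 := by
    exact_mod_cast Complex.ofReal_ne_zero.mpr Real.pi_ne_zero
  field_simp

private lemma zen_submean {p : ℝ} (hp : 1 ≤ p) {F : ℂ → ℂ}
    (hF : DifferentiableOn ℂ F {w : ℂ | 0 < w.re})
    {z : ℂ} {t : ℝ} (ht : 0 < t) (hlt : t < z.re) :
    ENNReal.ofReal (2 * Real.pi * ‖F z‖ ^ p)
      ≤ ∫⁻ θ in Set.Ioo (-Real.pi) Real.pi, ENNReal.ofReal (‖F (circleMap z t θ)‖ ^ p) := by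
  have hpi := Real.pi_pos
  set μ : Measure ℝ := volume.restrict (Set.Ioc (-Real.pi) Real.pi) with hμ
  have hμuniv : μ Set.univ = ENNReal.ofReal (2 * Real.pi) := by
    rw [hμ, Measure.restrict_apply_univ, Real.volume_Ioc]
    congr 1
    ring
  haveI : IsFiniteMeasure μ := ⟨by rw [hμuniv]; exact ENNReal.ofReal_lt_top⟩
  haveI : NeZero μ := by
    refine ⟨fun h => ?_⟩
    rw [h] at hμuniv
    simp only [Measure.coe_zero, Pi.zero_apply] at hμuniv
    exact absurd hμuniv.symm (ENNReal.ofReal_pos.mpr (by positivity)).ne'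
  have hcm : Continuous fun θ : ℝ => F (circleMap z t θ) := by
    apply hF.continuousOn.comp_continuous (continuous_circleMap z t)
    intro θ
    exact zen_mem_halfplane ht.le hlt (circleMap_mem_closedBall z ht.le θ)
  have hcn : Continuous fun θ : ℝ => ‖F (circleMap z t θ)‖ := hcm.norm
  have hcnp : Continuous fun θ : ℝ => ‖F (circleMap z t θ)‖ ^ p :=
    hcn.rpow_const fun θ => Or.inr (by linarith)
  have hint : Integrable (fun θ : ℝ => ‖F (circleMap z t θ)‖) μ :=
    hcn.integrableOn_Icc.mono_set Set.Ioc_subset_Icc_self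
  have hint2 : Integrable (fun θ : ℝ => ‖F (circleMap z t θ)‖ ^ p) μ :=
    hcnp.integrableOn_Icc.mono_set Set.Ioc_subset_Icc_self
  have havg := (convexOn_rpow hp).map_average_le
    (continuousOn_id.rpow_const fun x _ => Or.inr (by linarith)) isClosed_Ici
    (Filter.Eventually.of_forall fun θ => norm_nonneg _) hint hint2
  -- havg : (⨍ θ, ‖F (circleMap z t θ)‖ ∂μ) ^ p ≤ ⨍ θ, ‖F (circleMap z t θ)‖ ^ p ∂μ
  have hFz : ‖F z‖ ≤ ⨍ θ, ‖F (circleMap z t θ)‖ ∂μ := by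
    rw [average_eq, measureReal_def, hμuniv, ENNReal.toReal_ofReal (by positivity), smul_eq_mul]
    have hIeq : ∫ θ in (-Real.pi)..Real.pi, F (circleMap z t θ)
        = ∫ θ, F (circleMap z t θ) ∂μ := by
      rw [intervalIntegral.integral_of_le (by linarith)]
    rw [zen_meanvalue hF ht hlt, hIeq, norm_mul]
    have h2 : ‖(2 * (Real.pi : ℂ))⁻¹‖ = (2 * Real.pi)⁻¹ := by
      rw [norm_inv, show (2 * (Real.pi:ℂ)) = ((2 * Real.pi : ℝ) : ℂ) by push_cast; ring,
        Complex.norm_real, Real.norm_eq_abs, abs_of_pos (by positivity)]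
    rw [h2]
    have h3 := norm_integral_le_integral_norm (fun θ => F (circleMap z t θ)) (μ := μ)
    have h4 : (0:ℝ) < (2 * Real.pi)⁻¹ := by positivity
    exact mul_le_mul_of_nonneg_left h3 h4.le
  have hFzp : ‖F z‖ ^ p ≤ ⨍ θ, ‖F (circleMap z t θ)‖ ^ p ∂μ :=
    le_trans (Real.rpow_le_rpow (norm_nonneg _) hFz (by linarith)) havg
  have h5 : 2 * Real.pi * ‖F z‖ ^ p ≤ ∫ θ, ‖F (circleMap z t θ)‖ ^ p ∂μ := by
    rw [average_eq, measureReal_def, hμuniv, ENNReal.toReal_ofReal (by positivity), smul_eq_mul] at hFzp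
    have h6 : (0:ℝ) < 2 * Real.pi := by positivity
    calc 2 * Real.pi * ‖F z‖ ^ p
        ≤ 2 * Real.pi * ((2 * Real.pi)⁻¹ * ∫ θ, ‖F (circleMap z t θ)‖ ^ p ∂μ) :=
          mul_le_mul_of_nonneg_left hFzp h6.le
      _ = ∫ θ, ‖F (circleMap z t θ)‖ ^ p ∂μ := by field_simp
  have h7 : ENNReal.ofReal (∫ θ, ‖F (circleMap z t θ)‖ ^ p ∂μ)
      = ∫⁻ θ, ENNReal.ofReal (‖F (circleMap z t θ)‖ ^ p) ∂μ :=
    ofReal_integral_eq_lintegral_ofReal hint2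
      (Filter.Eventually.of_forall fun θ => Real.rpow_nonneg (norm_nonneg _) p)
  have h8 : volume.restrict (Set.Ioc (-Real.pi) Real.pi)
      = volume.restrict (Set.Ioo (-Real.pi) Real.pi) :=
    (Measure.restrict_congr_set Ioo_ae_eq_Ioc).symm
  calc ENNReal.ofReal (2 * Real.pi * ‖F z‖ ^ p)
      ≤ ENNReal.ofReal (∫ θ, ‖F (circleMap z t θ)‖ ^ p ∂μ) := ENNReal.ofReal_le_ofReal h5
    _ = ∫⁻ θ, ENNReal.ofReal (‖F (circleMap z t θ)‖ ^ p) ∂μ := h7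
    _ = ∫⁻ θ in Set.Ioo (-Real.pi) Real.pi, ENNReal.ofReal (‖F (circleMap z t θ)‖ ^ p) := by
        rw [hμ, h8]

private lemma zen_point_eq (z : ℂ) (t θ : ℝ) :
    ((z.re + t * Real.cos θ : ℝ) : ℂ) + ((z.im + t * Real.sin θ : ℝ) : ℂ) * Complex.I
      = circleMap z t θ := by
  rw [circleMap, Complex.exp_mul_I]
  apply Complex.ext <;>
    simp [Complex.add_re, Complex.add_im, Complex.mul_re, Complex.mul_im,
      Complex.cos_ofReal_re, Complex.sin_ofReal_re, Complex.cos_ofReal_im,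
      Complex.sin_ofReal_im] <;> ring

private lemma zen_meas {p : ℝ} {F : ℂ → ℂ} (hm : Measurable F) :
    Measurable fun q : ℝ × ℝ => ENNReal.ofReal (‖F ((q.1 : ℂ) + (q.2 : ℂ) * Complex.I)‖ ^ p) := by
  have h1 : Continuous fun q : ℝ × ℝ => (q.1 : ℂ) + (q.2 : ℂ) * Complex.I := by
    continuity
  exact ENNReal.measurable_ofReal.comp
    (((hm.comp h1.measurable).norm).pow_const p)

private lemma zen_tonelli {h : ℝ × ℝ → ℝ≥0∞} (hm : Measurable h) {s t : Set ℝ}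
    (hs : MeasurableSet s) (ht : MeasurableSet t) :
    ∫⁻ q in s ×ˢ t, h q ∂(volume : Measure (ℝ × ℝ))
      = ∫⁻ x in s, ∫⁻ y in t, h (x, y) := by
  rw [Measure.volume_eq_prod, ← Measure.prod_restrict,
    lintegral_prod _ hm.aemeasurable]

private lemma zen_lint_id {ρ : ℝ} (hρ : 0 < ρ) :
    ∫⁻ t in Set.Ioo 0 ρ, ENNReal.ofReal t = ENNReal.ofReal (ρ ^ 2 / 2) := by
  rw [← ofReal_integral_eq_lintegral_ofReal]
  · congr 1
    have hid : ∫ t in (0:ℝ)..ρ, t = ρ ^ 2 / 2 := by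
      rw [integral_id]; ring
    rw [← MeasureTheory.integral_Ioc_eq_integral_Ioo, ← intervalIntegral.integral_of_le hρ.le, hid]
  · exact continuous_id.integrableOn_Icc.mono_set Set.Ioo_subset_Icc_self
  · filter_upwards [ae_restrict_mem measurableSet_Ioo] with x hx using hx.1.le

private lemma zen_disk {p : ℝ} (hp : 1 ≤ p) {F : ℂ → ℂ} (hm : Measurable F)
    (hF : DifferentiableOn ℂ F {w : ℂ | 0 < w.re}) {z : ℂ} {ρ : ℝ} (hρ : 0 < ρ)
    (hρz : ρ < z.re) :
    ENNReal.ofReal (Real.pi * ρ ^ 2 * ‖F z‖ ^ p)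
      ≤ ∫⁻ u in Set.Ioo (z.re - ρ) (z.re + ρ),
          ∫⁻ y : ℝ, ENNReal.ofReal (‖F ((u : ℂ) + (y : ℂ) * Complex.I)‖ ^ p) := by
  have hpi := Real.pi_pos
  set g : ℝ × ℝ → ℝ≥0∞ :=
    fun q => ENNReal.ofReal (‖F ((q.1 : ℂ) + (q.2 : ℂ) * Complex.I)‖ ^ p) with hg
  have hgm : Measurable g := zen_meas hm
  set s : Set (ℝ × ℝ) := Set.Ioo 0 ρ ×ˢ Set.Ioo (-Real.pi) Real.pi with hsdef
  have hsm : MeasurableSet s := measurableSet_Ioo.prod measurableSet_Ioo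
  set f : ℝ × ℝ → ℝ × ℝ := fun q => ((z.re, z.im) : ℝ × ℝ) + polarCoord.symm q with hfdef
  have hfeq : ∀ q : ℝ × ℝ, f q = (z.re + q.1 * Real.cos q.2, z.im + q.1 * Real.sin q.2) := by
    intro q
    rw [hfdef]
    simp [polarCoord_symm_apply, Prod.ext_iff]
  set B : ℝ × ℝ → ℝ × ℝ →L[ℝ] ℝ × ℝ := fun q =>
    LinearMap.toContinuousLinearMap (Matrix.toLin (Module.Basis.finTwoProd ℝ) (Module.Basis.finTwoProd ℝ)
      !![Real.cos q.2, -q.1 * Real.sin q.2; Real.sin q.2, q.1 * Real.cos q.2]) with hB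
  have hB_det : ∀ q : ℝ × ℝ, (B q).det = q.1 := by
    intro q
    conv_rhs => rw [← one_mul q.1, ← Real.cos_sq_add_sin_sq q.2]
    simp only [hB, neg_mul, LinearMap.det_toContinuousLinearMap, LinearMap.det_toLin,
      Matrix.det_fin_two_of, sub_neg_eq_add]
    ring
  have hf' : ∀ q ∈ s, HasFDerivWithinAt f (B q) s q := fun q _ =>
    ((hasFDerivAt_polarCoord_symm q).const_add _).hasFDerivWithinAt
  have hsub : s ⊆ polarCoord.target := by
    rw [polarCoord_target, hsdef]
    exact Set.prod_mono Set.Ioo_subset_Ioi_self fun x hx => hx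
  have hinj : Set.InjOn f s := by
    intro q hq q' hq' h
    have h' : polarCoord.symm q = polarCoord.symm q' := by
      have h2 : ((z.re, z.im) : ℝ × ℝ) + polarCoord.symm q
          = ((z.re, z.im) : ℝ × ℝ) + polarCoord.symm q' := h
      exact add_left_cancel h2
    have hq1 : q ∈ polarCoord.symm.source := by
      rw [OpenPartialHomeomorph.symm_source]; exact hsub hq
    have hq2 : q' ∈ polarCoord.symm.source := by
      rw [OpenPartialHomeomorph.symm_source]; exact hsub hq'
    exact polarCoord.symm.injOn hq1 hq2 h'
  have key := lintegral_image_eq_lintegral_abs_det_fderiv_mul volume hsm hf' hinj g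
  set D : Set (ℝ × ℝ) := {q | (q.1 - z.re) ^ 2 + (q.2 - z.im) ^ 2 < ρ ^ 2} with hD
  have himg : f '' s ⊆ D := by
    rintro _ ⟨q, hq, rfl⟩
    rw [hfeq q]
    simp only [hD, Set.mem_setOf_eq]
    have h1 := Real.sin_sq_add_cos_sq q.2
    have hq1 : 0 < q.1 := hq.1.1
    have hq2 : q.1 < ρ := hq.1.2
    have hcalc : (z.re + q.1 * Real.cos q.2 - z.re) ^ 2 + (z.im + q.1 * Real.sin q.2 - z.im) ^ 2
        = q.1 ^ 2 * (Real.sin q.2 ^ 2 + Real.cos q.2 ^ 2) := by ring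
    rw [hcalc, h1, mul_one]
    nlinarith
  have hD2 : D ⊆ Set.Ioo (z.re - ρ) (z.re + ρ) ×ˢ (Set.univ : Set ℝ) := by
    rintro q hq
    simp only [hD, Set.mem_setOf_eq] at hq
    refine ⟨⟨?_, ?_⟩, Set.mem_univ _⟩ <;> nlinarith [sq_nonneg (q.2 - z.im)]
  have hmeas2 : Measurable fun q : ℝ × ℝ => ENNReal.ofReal q.1 * g (f q) := by
    have hfc : Continuous f := by
      have : f = fun q : ℝ × ℝ => (z.re + q.1 * Real.cos q.2, z.im + q.1 * Real.sin q.2) :=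
        funext hfeq
      rw [this]
      fun_prop
    exact (measurable_fst.ennreal_ofReal).mul (hgm.comp hfc.measurable)
  calc ENNReal.ofReal (Real.pi * ρ ^ 2 * ‖F z‖ ^ p)
      = ENNReal.ofReal (ρ ^ 2 / 2) * ENNReal.ofReal (2 * Real.pi * ‖F z‖ ^ p) := by
        rw [← ENNReal.ofReal_mul (by positivity)]
        congr 1
        ring
    _ = (∫⁻ t in Set.Ioo 0 ρ, ENNReal.ofReal t) * ENNReal.ofReal (2 * Real.pi * ‖F z‖ ^ p) := by
        rw [zen_lint_id hρ]
    _ = ∫⁻ t in Set.Ioo 0 ρ, ENNReal.ofReal t * ENNReal.ofReal (2 * Real.pi * ‖F z‖ ^ p) :=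
        (lintegral_mul_const' _ _ ENNReal.ofReal_ne_top).symm
    _ ≤ ∫⁻ t in Set.Ioo 0 ρ,
          ENNReal.ofReal t * ∫⁻ θ in Set.Ioo (-Real.pi) Real.pi,
            ENNReal.ofReal (‖F (circleMap z t θ)‖ ^ p) := by
        refine setLIntegral_mono' measurableSet_Ioo fun t htmem => ?_
        exact mul_le_mul_right (zen_submean hp hF htmem.1 (htmem.2.trans hρz)) _
    _ = ∫⁻ t in Set.Ioo 0 ρ, ∫⁻ θ in Set.Ioo (-Real.pi) Real.pi,
          ENNReal.ofReal t * g (f (t, θ)) := by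
        refine setLIntegral_congr_fun measurableSet_Ioo (fun t htmem => ?_)
        rw [lintegral_const_mul' _ _ ENNReal.ofReal_ne_top]
        congr 1
        refine lintegral_congr fun θ => ?_
        rw [hg]
        simp only
        rw [hfeq (t, θ)]
        rw [show ((z.re + t * Real.cos θ, z.im + t * Real.sin θ) : ℝ × ℝ).1
            = (z.re + t * Real.cos θ : ℝ) from rfl]
        rw [show ((z.re + t * Real.cos θ, z.im + t * Real.sin θ) : ℝ × ℝ).2
            = (z.im + t * Real.sin θ : ℝ) from rfl]
        rw [zen_point_eq z t θ]
    _ = ∫⁻ q in s, ENNReal.ofReal q.1 * g (f q) ∂(volume : Measure (ℝ × ℝ)) := by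
        rw [zen_tonelli hmeas2 measurableSet_Ioo measurableSet_Ioo]
    _ = ∫⁻ q in s, ENNReal.ofReal |(B q).det| * g (f q) ∂(volume : Measure (ℝ × ℝ)) := by
        refine setLIntegral_congr_fun hsm (fun q hq => ?_)
        rw [hB_det q, abs_of_pos hq.1.1]
    _ = ∫⁻ q in f '' s, g q ∂(volume : Measure (ℝ × ℝ)) := key.symm
    _ ≤ ∫⁻ q in D, g q ∂(volume : Measure (ℝ × ℝ)) := lintegral_mono_set himg
    _ ≤ ∫⁻ q in Set.Ioo (z.re - ρ) (z.re + ρ) ×ˢ (Set.univ : Set ℝ), g q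
          ∂(volume : Measure (ℝ × ℝ)) := lintegral_mono_set hD2
    _ = ∫⁻ u in Set.Ioo (z.re - ρ) (z.re + ρ), ∫⁻ y in (Set.univ : Set ℝ), g (u, y) :=
        zen_tonelli hgm measurableSet_Ioo MeasurableSet.univ
    _ = ∫⁻ u in Set.Ioo (z.re - ρ) (z.re + ρ),
          ∫⁻ y : ℝ, ENNReal.ofReal (‖F ((u : ℂ) + (y : ℂ) * Complex.I)‖ ^ p) := by
        refine lintegral_congr fun u => ?_
        rw [Measure.restrict_univ]

/-- Functions in the Zen space `A^p_ω` are uniformly bounded on compact subsets of the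
right half-plane in terms of the `A^p_ω` norm. -/
theorem stmt_10 (p : ℝ) (hp : 1 ≤ p) (ν : Measure ℝ)
    (hν0 : ν (Set.Iio 0) = 0)
    (hνpos : ∀ t : ℝ, 0 < t → 0 < ν (Set.Ico 0 t))
    (hνfin : ∀ t : ℝ, 0 < t → ν (Set.Ico 0 t) < ⊤)
    (R : ℝ) (hR : 0 < R)
    (hdoub : ∀ t : ℝ, 0 < t → ν (Set.Ico 0 (2 * t)) ≤ ENNReal.ofReal R * ν (Set.Ico 0 t))
    (E : Set ℂ) (hE : IsCompact E) (hE' : E ⊆ {z : ℂ | 0 < z.re}) :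
    ∃ C > 0, ∀ F : ℂ → ℂ,
      DifferentiableOn ℂ F {z : ℂ | 0 < z.re} →
      zenNormPow p ν F < ⊤ →
      ∀ z ∈ E, ‖F z‖ ≤ C * (zenNormPow p ν F).toReal ^ (1 / p) := by
  classical
  rcases E.eq_empty_or_nonempty with rfl | hne
  · exact ⟨1, one_pos, fun F _ _ z hz => absurd hz (Set.notMem_empty z)⟩
  obtain ⟨z₀, hz₀E, hmin⟩ := hE.exists_isMinOn hne Complex.continuous_re.continuousOn
  obtain ⟨z₁, hz₁E, hmax⟩ := hE.exists_isMaxOn hne Complex.continuous_re.continuousOn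
  set δ := z₀.re with hδdef
  have hδ : 0 < δ := hE' hz₀E
  set M := z₁.re with hMdef
  have hδM : δ ≤ M := hmin hz₁E
  set ρ := δ / 4 with hρdef
  set L := M + δ with hLdef
  have hρ : 0 < ρ := by positivity
  have hL : 0 < L := by rw [hLdef]; linarith
  set X := Set.Ico (0 : ℝ) (δ / 4) with hXdef
  have hνX : 0 < ν X := hνpos _ (by positivity)
  have hνXfin : ν X < ⊤ := hνfin _ (by positivity)
  have hνXt : 0 < (ν X).toReal := ENNReal.toReal_pos hνX.ne' hνXfin.ne
  set c₀ := Real.pi * ρ ^ 2 with hc₀def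
  have hc₀ : 0 < c₀ := by positivity
  set K := L / (c₀ * (ν X).toReal) with hKdef
  have hK : 0 < K := by positivity
  refine ⟨K ^ p⁻¹, Real.rpow_pos_of_pos hK _, ?_⟩
  intro F hFdiff hFfin z hz
  have hp0 : (0 : ℝ) < p := lt_of_lt_of_le one_pos hp
  have hopen : IsOpen {w : ℂ | 0 < w.re} := isOpen_lt continuous_const Complex.continuous_re
  set G : ℂ → ℂ := Set.indicator {w : ℂ | 0 < w.re} F with hGdef
  have hGm : Measurable G := by
    rw [hGdef, ← Set.piecewise_eq_indicator]
    exact ContinuousOn.measurable_piecewise hFdiff.continuousOn continuousOn_const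
      hopen.measurableSet
  have hGeq : ∀ w ∈ {w : ℂ | 0 < w.re}, G w = F w := fun w hw => Set.indicator_of_mem hw F
  have hGdiff : DifferentiableOn ℂ G {w : ℂ | 0 < w.re} := hFdiff.congr hGeq
  have haz : δ ≤ z.re := hmin hz
  have hzM : z.re ≤ M := hmax hz
  have hρz : ρ < z.re := by rw [hρdef]; linarith
  set N := zenNormPow p ν F with hNdef
  have hre : ∀ u y : ℝ, ((u : ℂ) + (y : ℂ) * Complex.I).re = u := by
    intro u y
    simp [Complex.add_re, Complex.mul_re]
  -- the master inequality
  have key : ENNReal.ofReal (c₀ * ‖G z‖ ^ p) * ν X ≤ ENNReal.ofReal L * N := by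
    have hIx : ∀ x ∈ X, ENNReal.ofReal (c₀ * ‖G z‖ ^ p)
        ≤ ∫⁻ r in Set.Ioo 0 L,
            ∫⁻ y : ℝ, ENNReal.ofReal (‖G (((x + r : ℝ) : ℂ) + y * Complex.I)‖ ^ p) := by
      intro x hx
      have hx0 : 0 ≤ x := hx.1
      have hx4 : x < δ / 4 := hx.2
      have htrans : ∫⁻ r in Set.Ioo 0 L,
            ∫⁻ y : ℝ, ENNReal.ofReal (‖G (((x + r : ℝ) : ℂ) + y * Complex.I)‖ ^ p)
          = ∫⁻ u in Set.Ioo x (x + L),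
            ∫⁻ y : ℝ, ENNReal.ofReal (‖G ((u : ℂ) + y * Complex.I)‖ ^ p) := by
        have hmp : MeasurePreserving (fun r : ℝ => x + r) volume volume :=
          measurePreserving_add_left volume x
        have hemb : MeasurableEmbedding (fun r : ℝ => x + r) :=
          (MeasurableEquiv.addLeft x).measurableEmbedding
        have hpre : (fun r : ℝ => x + r) ⁻¹' Set.Ioo x (x + L) = Set.Ioo 0 L := by
          ext r
          simp only [Set.mem_preimage, Set.mem_Ioo]
          constructor <;> rintro ⟨h1, h2⟩ <;> constructor <;> linarith
        have := hmp.setLIntegral_comp_preimage_emb hemb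
          (fun u => ∫⁻ y : ℝ, ENNReal.ofReal (‖G ((u : ℂ) + y * Complex.I)‖ ^ p))
          (Set.Ioo x (x + L))
        rw [hpre] at this
        exact this
      have hIoosub : Set.Ioo (z.re - ρ) (z.re + ρ) ⊆ Set.Ioo x (x + L) := by
        intro u hu
        rcases hu with ⟨h1, h2⟩
        constructor
        · rw [hρdef] at h1; linarith
        · rw [hρdef] at h2; rw [hLdef]; linarith
      calc ENNReal.ofReal (c₀ * ‖G z‖ ^ p)
          ≤ ∫⁻ u in Set.Ioo (z.re - ρ) (z.re + ρ),
              ∫⁻ y : ℝ, ENNReal.ofReal (‖G ((u : ℂ) + y * Complex.I)‖ ^ p) :=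
            zen_disk hp hGm hGdiff hρ hρz
        _ ≤ ∫⁻ u in Set.Ioo x (x + L),
              ∫⁻ y : ℝ, ENNReal.ofReal (‖G ((u : ℂ) + y * Complex.I)‖ ^ p) :=
            lintegral_mono_set hIoosub
        _ = _ := htrans.symm
    haveI : IsFiniteMeasure (ν.restrict X) :=
      ⟨by rw [Measure.restrict_apply_univ]; exact hνXfin⟩
    have h3 : Measurable fun q : (ℝ × ℝ) × ℝ =>
        ENNReal.ofReal (‖G (((q.1.2 + q.1.1 : ℝ) : ℂ) + (q.2 : ℂ) * Complex.I)‖ ^ p) := by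
      have hc : Continuous fun q : (ℝ × ℝ) × ℝ =>
          ((q.1.2 + q.1.1 : ℝ) : ℂ) + (q.2 : ℂ) * Complex.I := by fun_prop
      exact ENNReal.measurable_ofReal.comp (((hGm.comp hc.measurable).norm).pow_const p)
    have hswapmeas : Measurable fun rx : ℝ × ℝ =>
        ∫⁻ y : ℝ, ENNReal.ofReal (‖G (((rx.2 + rx.1 : ℝ) : ℂ) + (y : ℂ) * Complex.I)‖ ^ p) :=
      Measurable.lintegral_prod_right' h3
    have hswap : ∫⁻ x in X, (∫⁻ r in Set.Ioo 0 L,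
          ∫⁻ y : ℝ, ENNReal.ofReal (‖G (((x + r : ℝ) : ℂ) + y * Complex.I)‖ ^ p)) ∂ν
        = ∫⁻ r in Set.Ioo 0 L, ∫⁻ x in X,
          (∫⁻ y : ℝ, ENNReal.ofReal (‖G (((x + r : ℝ) : ℂ) + y * Complex.I)‖ ^ p)) ∂ν := by
      exact (lintegral_lintegral_swap hswapmeas.aemeasurable).symm
    calc ENNReal.ofReal (c₀ * ‖G z‖ ^ p) * ν X
        = ∫⁻ _ in X, ENNReal.ofReal (c₀ * ‖G z‖ ^ p) ∂ν := (setLIntegral_const X _).symm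
      _ ≤ ∫⁻ x in X, (∫⁻ r in Set.Ioo 0 L,
            ∫⁻ y : ℝ, ENNReal.ofReal (‖G (((x + r : ℝ) : ℂ) + y * Complex.I)‖ ^ p)) ∂ν :=
          setLIntegral_mono' measurableSet_Ico hIx
      _ = ∫⁻ r in Set.Ioo 0 L, ∫⁻ x in X,
            (∫⁻ y : ℝ, ENNReal.ofReal (‖G (((x + r : ℝ) : ℂ) + y * Complex.I)‖ ^ p)) ∂ν := hswap
      _ ≤ ∫⁻ r in Set.Ioo 0 L, ∫⁻ x : ℝ,
            (∫⁻ y : ℝ, ENNReal.ofReal (‖G (((x + r : ℝ) : ℂ) + y * Complex.I)‖ ^ p)) ∂ν :=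
          lintegral_mono fun r => setLIntegral_le_lintegral _ _
      _ = ∫⁻ r in Set.Ioo 0 L, ∫⁻ x : ℝ,
            (∫⁻ y : ℝ, ENNReal.ofReal (‖F (((x + r : ℝ) : ℂ) + y * Complex.I)‖ ^ p)) ∂ν := by
          refine setLIntegral_congr_fun measurableSet_Ioo (fun r hr => ?_)
          refine lintegral_congr_ae ?_
          have hae : ∀ᵐ x ∂ν, (0 : ℝ) ≤ x := by
            rw [ae_iff]
            have : {x : ℝ | ¬ (0 : ℝ) ≤ x} = Set.Iio 0 := by
              ext x; simp [not_le]
            rw [this]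
            exact hν0
          refine hae.mono fun x hx0 => ?_
          refine lintegral_congr fun y => ?_
          congr 1
          rw [hGeq]
          have : (0 : ℝ) < x + r := by
            rcases hr with ⟨hr1, _⟩
            linarith
          simpa [hre (x + r) y] using this
      _ ≤ ∫⁻ _ in Set.Ioo 0 L, N := by
          refine setLIntegral_mono' measurableSet_Ioo fun r hr => ?_
          have hb : (∫⁻ x : ℝ, (∫⁻ y : ℝ,
              ENNReal.ofReal (‖F (((x + r : ℝ) : ℂ) + y * Complex.I)‖ ^ p)) ∂ν)
              ≤ ⨆ r' ∈ Set.Ioi (0:ℝ), ∫⁻ x : ℝ, (∫⁻ y : ℝ,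
                ENNReal.ofReal (‖F (((x + r' : ℝ) : ℂ) + y * Complex.I)‖ ^ p)) ∂ν :=
            le_biSup (f := fun r' : ℝ => ∫⁻ x : ℝ, (∫⁻ y : ℝ,
              ENNReal.ofReal (‖F (((x + r' : ℝ) : ℂ) + y * Complex.I)‖ ^ p)) ∂ν)
              (show r ∈ Set.Ioi (0:ℝ) from hr.1)
          rw [hNdef]
          unfold zenNormPow
          exact hb
      _ = N * ENNReal.ofReal L := by rw [setLIntegral_const, Real.volume_Ioo, sub_zero]
      _ = ENNReal.ofReal L * N := mul_comm _ _
  -- pass to the real numbers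
  have hNfin : N ≠ ⊤ := hFfin.ne
  have hGzn : 0 ≤ ‖G z‖ ^ p := Real.rpow_nonneg (norm_nonneg _) p
  have h1 : c₀ * ‖G z‖ ^ p * (ν X).toReal ≤ L * N.toReal := by
    have hlhs : ENNReal.ofReal (c₀ * ‖G z‖ ^ p) * ν X ≠ ⊤ :=
      ENNReal.mul_ne_top ENNReal.ofReal_ne_top hνXfin.ne
    have hrhs : ENNReal.ofReal L * N ≠ ⊤ := ENNReal.mul_ne_top ENNReal.ofReal_ne_top hNfin
    have := (ENNReal.toReal_le_toReal hlhs hrhs).mpr key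
    rwa [ENNReal.toReal_mul, ENNReal.toReal_mul, ENNReal.toReal_ofReal (by positivity),
      ENNReal.toReal_ofReal hL.le] at this
  have h2 : ‖G z‖ ^ p ≤ K * N.toReal := by
    have hq : ‖G z‖ ^ p ≤ L * N.toReal / (c₀ * (ν X).toReal) := by
      rw [le_div_iff₀ (by positivity)]
      nlinarith
    calc ‖G z‖ ^ p ≤ L * N.toReal / (c₀ * (ν X).toReal) := hq
      _ = K * N.toReal := by rw [hKdef]; ring
  have hGz : G z = F z := hGeq z (hE' hz)
  have hNt : (0:ℝ) ≤ N.toReal := ENNReal.toReal_nonneg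
  calc ‖F z‖ = (‖F z‖ ^ p) ^ p⁻¹ := (Real.rpow_rpow_inv (norm_nonneg _) hp0.ne').symm
    _ ≤ (K * N.toReal) ^ p⁻¹ := by
        refine Real.rpow_le_rpow (Real.rpow_nonneg (norm_nonneg _) p) ?_ (by positivity)
        rw [← hGz]
        exact h2
    _ = K ^ p⁻¹ * N.toReal ^ p⁻¹ := Real.mul_rpow hK.le hNt
    _ = K ^ p⁻¹ * N.toReal ^ (1 / p) := by rw [one_div]
end

section
/- Define G : ℂ → ℂ by G(x+iy) = i/(1 + x + iy) if y > 0 and G(x+iy) = 0 if y ≤ 0, and for k = 1, 2, … define f_k(z) = (1+z)^{-1}·(exp(i e^{4kπiz}) − 1)·e^{-4kπiz}. Then each f_k is continuous on the closed right half-plane {Re z ≥ 0} and holomorphic on {Re z > 0}, the sequence converges to G in L²(ω_{2,1}), i.e. Σ_{n=0}^∞ (2ⁿ/n!) ∫_ℝ |f_k(n/2 + iy) − G(n/2 + iy)|² dy → 0 as k → ∞, and yet there is no function h holomorphic on {Re z > 0} such that, for every integer n ≥ 1, h(n/2 + iy) = G(n/2 + iy) for almost every y ∈ ℝ. (Hence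 the closure X²_{2,1} of the continuous-up-to-the-boundary holomorphic functions in L²(ω_{2,1}) contains elements that are not holomorphic in the right half-plane.) -/
open MeasureTheory Complex Filter


noncomputable def wf (k : ℕ) (y : ℝ) : ℝ := Real.exp (-(4 * Real.pi * y)) ^ k
noncomputable def Hkf (k : ℕ) (y : ℝ) : ℂ :=
  (Complex.exp (Complex.I * (wf k y : ℂ)) - 1) / ((wf k y : ℝ) : ℂ)
noncomputable def indf (y : ℝ) : ℂ := if 0 < y then Complex.I else 0

lemma wf_pos (k : ℕ) (y : ℝ) : 0 < wf k y := pow_pos (Real.exp_pos _) k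

lemma l_exp (k n : ℕ) (y : ℝ) :
    Complex.exp (4 * (k : ℂ) * Real.pi * Complex.I * ((((n : ℝ) / 2 : ℝ) : ℂ) + y * Complex.I))
      = ((wf k y : ℝ) : ℂ) := by
  have h1 : 4 * (k : ℂ) * Real.pi * Complex.I * ((((n : ℝ) / 2 : ℝ) : ℂ) + y * Complex.I)
      = ((k * n : ℤ) : ℂ) * (2 * Real.pi * Complex.I) + ((-(4 * Real.pi * y) * k : ℝ) : ℂ) := by
    push_cast
    linear_combination (4 * (k : ℂ) * Real.pi * y) * Complex.I_sq
  rw [h1, Complex.exp_add, Complex.exp_int_mul_two_pi_mul_I, one_mul, ← Complex.ofReal_exp]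
  rw [wf, mul_comm, Real.exp_nat_mul]

lemma hexp2 (t : ℝ) : ‖Complex.exp (Complex.I * (t : ℂ)) - 1‖ ≤ 2 := by
  calc ‖Complex.exp (Complex.I * (t : ℂ)) - 1‖
      ≤ ‖Complex.exp (Complex.I * (t : ℂ))‖ + ‖(1 : ℂ)‖ := norm_sub_le _ _
    _ ≤ 2 := by
        rw [Complex.norm_exp]
        simp
        norm_num

lemma Hkf_norm_le_two (k : ℕ) (y : ℝ) : ‖Hkf k y‖ ≤ 2 := by
  have ht : 0 < wf k y := wf_pos k y
  rw [Hkf, norm_div]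
  have hn : ‖((wf k y : ℝ) : ℂ)‖ = wf k y := by
    simp [Complex.norm_real, Real.norm_eq_abs, abs_of_pos ht]
  rw [hn, div_le_iff₀ ht]
  rcases le_total (wf k y) 1 with h1 | h1
  · have habs : ‖Complex.I * (wf k y : ℂ)‖ ≤ 1 := by
      simpa [abs_of_pos ht] using h1
    have h2 := Complex.norm_exp_sub_one_le habs
    calc ‖Complex.exp (Complex.I * (wf k y : ℂ)) - 1‖
        ≤ 2 * ‖Complex.I * (wf k y : ℂ)‖ := h2
      _ = 2 * wf k y := by simp [abs_of_pos ht]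
  · calc ‖Complex.exp (Complex.I * ((wf k y : ℝ) : ℂ)) - 1‖ ≤ 2 := hexp2 _
      _ ≤ 2 * wf k y := by nlinarith

lemma Hkf_norm_le_div (k : ℕ) (y : ℝ) : ‖Hkf k y‖ ≤ 2 / wf k y := by
  have ht : 0 < wf k y := wf_pos k y
  rw [Hkf, norm_div]
  have hn : ‖((wf k y : ℝ) : ℂ)‖ = wf k y := by
    simp [Complex.norm_real, Real.norm_eq_abs, abs_of_pos ht]
  rw [hn]
  gcongr
  exact hexp2 _

lemma Hkf_tendsto {y : ℝ} (hy : y ≠ 0) :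
    Tendsto (fun k => Hkf k y) atTop (nhds (indf y)) := by
  rcases lt_or_gt_of_ne hy with hneg | hpos
  · have hr : (1 : ℝ) < Real.exp (-(4 * Real.pi * y)) := by
      rw [Real.one_lt_exp_iff]
      nlinarith [Real.pi_pos]
    have hrpos := Real.exp_pos (-(4 * Real.pi * y))
    have h0 : Tendsto (fun k : ℕ => 2 * ((Real.exp (-(4 * Real.pi * y)))⁻¹) ^ k) atTop (nhds 0) := by
      have := (tendsto_pow_atTop_nhds_zero_of_lt_one (inv_nonneg.2 hrpos.le)
        (inv_lt_one_of_one_lt₀ hr)).const_mul (2 : ℝ)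
      simpa using this
    have : Tendsto (fun k => Hkf k y) atTop (nhds 0) := by
      apply squeeze_zero_norm _ h0
      intro k
      calc ‖Hkf k y‖ ≤ 2 / wf k y := Hkf_norm_le_div k y
        _ = 2 * ((Real.exp (-(4 * Real.pi * y)))⁻¹) ^ k := by
            rw [div_eq_mul_inv, wf, inv_pow]
    simpa [indf, not_lt.2 hneg.le, if_neg (not_lt.2 hneg.le)] using this
  · have hr1 : Real.exp (-(4 * Real.pi * y)) < 1 := by
      rw [Real.exp_lt_one_iff]
      nlinarith [Real.pi_pos]
    have hw0 : Tendsto (fun k : ℕ => wf k y) atTop (nhds 0) :=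
      tendsto_pow_atTop_nhds_zero_of_lt_one (Real.exp_pos _).le hr1
    have hderiv : HasDerivAt (fun z : ℂ => Complex.exp (Complex.I * z)) Complex.I 0 := by
      have := ((hasDerivAt_id (0 : ℂ)).const_mul Complex.I).cexp
      simpa using this
    have hslope := hasDerivAt_iff_tendsto_slope.mp hderiv
    have hcast : Tendsto (fun k : ℕ => ((wf k y : ℝ) : ℂ)) atTop (nhdsWithin 0 {(0 : ℂ)}ᶜ) := by
      rw [tendsto_nhdsWithin_iff]
      constructor
      · have := (Complex.continuous_ofReal.tendsto 0).comp hw0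
        simpa [Function.comp_def] using this
      · refine Filter.Eventually.of_forall fun k => ?_
        simp only [Set.mem_compl_iff, Set.mem_singleton_iff]
        exact_mod_cast (wf_pos k y).ne'
    have hcomp := hslope.comp hcast
    have heq : ∀ k : ℕ, slope (fun z : ℂ => Complex.exp (Complex.I * z)) 0 ((wf k y : ℝ) : ℂ)
        = Hkf k y := by
      intro k
      rw [slope_def_field, Hkf]
      simp
    rw [indf, if_pos hpos]
    refine hcomp.congr fun k => heq k

lemma Hkf_continuous (k : ℕ) : Continuous (fun y => Hkf k y) := by
  unfold Hkf
  have hc : Continuous (fun y : ℝ => ((wf k y : ℝ) : ℂ)) := by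
    unfold wf
    exact Complex.continuous_ofReal.comp
      ((Real.continuous_exp.comp ((continuous_const.mul continuous_id).neg)).pow k)
  exact ((Continuous.cexp (continuous_const.mul hc)).sub continuous_const).div hc
    (fun y => Complex.ofReal_ne_zero.2 (wf_pos k y).ne')

lemma indf_measurable : Measurable indf :=
  Measurable.ite measurableSet_Ioi measurable_const measurable_const

lemma psif_meas (k : ℕ) : Measurable (fun y : ℝ => ‖Hkf k y - indf y‖ ^ 2 * (1 + y ^ 2)⁻¹) :=
  (((Hkf_continuous k).measurable.sub indf_measurable).norm.pow_const 2).mul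
    ((measurable_const.add (measurable_id.pow_const 2)).inv)

lemma diff_norm_le (k : ℕ) (y : ℝ) : ‖Hkf k y - indf y‖ ≤ 3 := by
  have h1 : ‖indf y‖ ≤ 1 := by
    rw [indf]; split_ifs <;> simp
  have := Hkf_norm_le_two k y
  calc ‖Hkf k y - indf y‖ ≤ ‖Hkf k y‖ + ‖indf y‖ := norm_sub_le _ _
    _ ≤ 3 := by linarith

lemma psif_le (k : ℕ) (y : ℝ) :
    ‖Hkf k y - indf y‖ ^ 2 * (1 + y ^ 2)⁻¹ ≤ 9 * (1 + y ^ 2)⁻¹ :=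
  mul_le_mul_of_nonneg_right
    (by nlinarith [diff_norm_le k y, norm_nonneg (Hkf k y - indf y)]) (by positivity)

lemma bound_integrable : Integrable (fun y : ℝ => 9 * (1 + y ^ 2)⁻¹) :=
  integrable_inv_one_add_sq.const_mul 9

lemma psif_integrable (k : ℕ) :
    Integrable (fun y : ℝ => ‖Hkf k y - indf y‖ ^ 2 * (1 + y ^ 2)⁻¹) :=
  bound_integrable.mono' (psif_meas k).aestronglyMeasurable
    (Filter.Eventually.of_forall fun y => by
      rw [Real.norm_eq_abs, _root_.abs_of_nonneg (by positivity)]; exact psif_le k y)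

lemma J_tendsto :
    Tendsto (fun k => ∫ y : ℝ, ‖Hkf k y - indf y‖ ^ 2 * (1 + y ^ 2)⁻¹) atTop (nhds 0) := by
  have hae0 : ∀ᵐ y : ℝ, y ≠ (0 : ℝ) := by
    have h1 : {y : ℝ | ¬ y ≠ 0} = {0} := by ext; simp
    rw [MeasureTheory.ae_iff, h1]
    exact Real.volume_singleton
  have h := MeasureTheory.tendsto_integral_of_dominated_convergence
    (F := fun k (y : ℝ) => ‖Hkf k y - indf y‖ ^ 2 * (1 + y ^ 2)⁻¹) (f := fun _ => (0 : ℝ))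
    (bound := fun y => 9 * (1 + y ^ 2)⁻¹)
    (fun k => (psif_meas k).aestronglyMeasurable) bound_integrable
    (fun k => Filter.Eventually.of_forall fun y => by
      rw [Real.norm_eq_abs, _root_.abs_of_nonneg (by positivity)]; exact psif_le k y)
    (by
      filter_upwards [hae0] with y hy
      have h2 := (((Hkf_tendsto hy).sub (tendsto_const_nhds (x := indf y))).norm.pow 2).mul_const ((1 + y ^ 2)⁻¹)
      simp only [sub_self, norm_zero] at h2
      simpa using h2)
  simpa using h



lemma freq_ae {p : ℝ → Prop} (hs : ∀ᵐ y : ℝ, p y) (y₀ : ℝ) : ∃ᶠ y in nhdsWithin y₀ {y₀}ᶜ, p y := by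
  by_contra hcon
  rw [Filter.not_frequently] at hcon
  rw [eventually_nhdsWithin_iff] at hcon
  obtain ⟨δ, hδ, hball⟩ := Metric.eventually_nhds_iff.mp hcon
  have hsub : Set.Ioo y₀ (y₀ + δ) ⊆ {y | ¬ p y} := by
    intro y hy
    have h1 : dist y y₀ < δ := by
      rw [Real.dist_eq, abs_of_pos (by linarith [hy.1])]
      linarith [hy.2]
    exact hball h1 (by simp; exact ne_of_gt hy.1)
  have h0 : volume {y | ¬ p y} = 0 := MeasureTheory.ae_iff.mp hs
  have := measure_mono (μ := (volume : Measure ℝ)) hsub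
  rw [h0, Real.volume_Ioo, nonpos_iff_eq_zero] at this
  simp at this
  linarith



/-- The closure `X²_{2,1}` of the continuous-up-to-the-boundary holomorphic functions in
`L²(ω_{2,1})` contains non-holomorphic elements: the functions
`f_k(z) = (1+z)⁻¹ (exp(i e^{4kπiz}) - 1) e^{-4kπiz}`, continuous on the closed right
half-plane and holomorphic on the open one, converge in `L²(ω_{2,1})` to
`G(x+iy) = i/(1+x+iy)` for `y > 0`, `G = 0` for `y ≤ 0`, and no holomorphic function on
the right half-plane agrees a.e. with `G` on every line `Re z = n/2`, `n ≥ 1`. -/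
theorem stmt_19 (G : ℂ → ℂ)
    (hG : ∀ z : ℂ, G z = if 0 < z.im then Complex.I / (1 + z) else 0)
    (f : ℕ → ℂ → ℂ)
    (hf : ∀ k : ℕ, ∀ z : ℂ, f k z = (1 + z)⁻¹ *
      (Complex.exp (Complex.I * Complex.exp (4 * (k : ℂ) * Real.pi * Complex.I * z)) - 1) /
      Complex.exp (4 * (k : ℂ) * Real.pi * Complex.I * z)) :
    (∀ k : ℕ, 1 ≤ k → ContinuousOn (f k) {z : ℂ | 0 ≤ z.re}
      ∧ DifferentiableOn ℂ (f k) {z : ℂ | 0 < z.re})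
    ∧ Filter.Tendsto (fun k : ℕ => ∑' n : ℕ, (2 : ℝ) ^ n / (Nat.factorial n : ℝ) *
        ∫ y : ℝ, ‖f k ((((n : ℝ) / 2 : ℝ) : ℂ) + y * Complex.I)
          - G ((((n : ℝ) / 2 : ℝ) : ℂ) + y * Complex.I)‖ ^ 2)
        Filter.atTop (nhds 0)
    ∧ ¬ ∃ h : ℂ → ℂ, DifferentiableOn ℂ h {z : ℂ | 0 < z.re} ∧
        ∀ n : ℕ, 1 ≤ n → ∀ᵐ y : ℝ,
          h ((((n : ℝ) / 2 : ℝ) : ℂ) + y * Complex.I)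
            = G ((((n : ℝ) / 2 : ℝ) : ℂ) + y * Complex.I) := by
  refine ⟨?_, ?_, ?_⟩
  · intro k _
    have hfk : f k = fun z => (1 + z)⁻¹ *
        (Complex.exp (Complex.I * Complex.exp (4 * (k : ℂ) * Real.pi * Complex.I * z)) - 1) /
        Complex.exp (4 * (k : ℂ) * Real.pi * Complex.I * z) := funext (hf k)
    have hdiff : ∀ z : ℂ, (0:ℝ) ≤ z.re → DifferentiableAt ℂ (f k) z := by
      intro z hz
      rw [hfk]
      have h1 : (1 : ℂ) + z ≠ 0 := by
        intro hc
        have := congrArg Complex.re hc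
        simp at this
        linarith
      have d2 : DifferentiableAt ℂ (fun z : ℂ => Complex.exp (4 * (k : ℂ) * Real.pi * Complex.I * z)) z :=
        (differentiableAt_id.const_mul _).cexp
      exact ((((differentiableAt_const _).add differentiableAt_id).inv h1).mul
        ((d2.const_mul Complex.I).cexp.sub (differentiableAt_const 1))).div d2 (Complex.exp_ne_zero _)
    exact ⟨fun z hz => (hdiff z hz).continuousAt.continuousWithinAt,
      fun z hz => (hdiff z (le_of_lt hz)).differentiableWithinAt⟩
  · set z : ℕ → ℝ → ℂ := fun n y => ((((n : ℝ) / 2 : ℝ) : ℂ) + y * Complex.I) with hzdef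
    have him : ∀ (n : ℕ) (y : ℝ), (z n y).im = y := by intro n y; simp [hzdef]
    have hfeq : ∀ (k n : ℕ) (y : ℝ),
        ‖f k (z n y) - G (z n y)‖ ^ 2
          = ‖Hkf k y - indf y‖ ^ 2 * ‖((1 : ℂ) + z n y)⁻¹‖ ^ 2 := by
      intro k n y
      have hdiffeq : f k (z n y) - G (z n y) = ((1 : ℂ) + z n y)⁻¹ * (Hkf k y - indf y) := by
        rw [hf, hG, him]
        have hexp : Complex.exp (4 * (k : ℂ) * Real.pi * Complex.I * z n y)
            = ((wf k y : ℝ) : ℂ) := l_exp k n y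
        rw [hexp, Hkf, indf]
        by_cases hy : 0 < y
        · rw [if_pos hy, if_pos hy]; ring
        · rw [if_neg hy, if_neg hy]; ring
      rw [hdiffeq, norm_mul, mul_pow, mul_comm]
    have hfac : ∀ (n : ℕ) (y : ℝ), ‖((1 : ℂ) + z n y)⁻¹‖ ^ 2 ≤ (1 + y ^ 2)⁻¹ := by
      intro n y
      have hre : ((1 : ℂ) + z n y).re = 1 + (n : ℝ) / 2 := by simp [hzdef]
      have him2 : ((1 : ℂ) + z n y).im = y := by simp [hzdef]
      rw [norm_inv, inv_pow]
      apply inv_anti₀ (by positivity)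
      have h1 : ‖(1 : ℂ) + z n y‖ ^ 2 = ((1 : ℂ) + z n y).re ^ 2 + ((1 : ℂ) + z n y).im ^ 2 := by
        rw [Complex.sq_norm, Complex.normSq_apply]; ring
      rw [h1, hre, him2]
      nlinarith [Nat.cast_nonneg (α := ℝ) n]
    have hmeas : ∀ (k n : ℕ), Measurable
        (fun y : ℝ => ‖Hkf k y - indf y‖ ^ 2 * ‖((1 : ℂ) + z n y)⁻¹‖ ^ 2) := by
      intro k n
      apply Measurable.mul
      · exact ((Hkf_continuous k).measurable.sub indf_measurable).norm.pow_const 2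
      · apply Measurable.pow_const
        apply Measurable.norm
        apply Measurable.inv
        exact measurable_const.add (measurable_const.add (Complex.measurable_ofReal.mul
          measurable_const))
    have hle : ∀ (k n : ℕ) (y : ℝ), ‖Hkf k y - indf y‖ ^ 2 * ‖((1 : ℂ) + z n y)⁻¹‖ ^ 2
        ≤ ‖Hkf k y - indf y‖ ^ 2 * (1 + y ^ 2)⁻¹ :=
      fun k n y => mul_le_mul_of_nonneg_left (hfac n y) (by positivity)
    have hint : ∀ (k n : ℕ), Integrable
        (fun y : ℝ => ‖Hkf k y - indf y‖ ^ 2 * ‖((1 : ℂ) + z n y)⁻¹‖ ^ 2) := by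
      intro k n
      refine bound_integrable.mono' (hmeas k n).aestronglyMeasurable
        (Filter.Eventually.of_forall fun y => ?_)
      rw [Real.norm_eq_abs, _root_.abs_of_nonneg (by positivity)]
      exact le_trans (hle k n y) (psif_le k y)
    have hIn_le : ∀ (k n : ℕ), (∫ y : ℝ, ‖f k (z n y) - G (z n y)‖ ^ 2)
        ≤ ∫ y : ℝ, ‖Hkf k y - indf y‖ ^ 2 * (1 + y ^ 2)⁻¹ := by
      intro k n
      have h1 : (fun y : ℝ => ‖f k (z n y) - G (z n y)‖ ^ 2)
          = fun y : ℝ => ‖Hkf k y - indf y‖ ^ 2 * ‖((1 : ℂ) + z n y)⁻¹‖ ^ 2 :=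
        funext fun y => hfeq k n y
      rw [h1]
      exact integral_mono (hint k n) (psif_integrable k) (fun y => hle k n y)
    have hIn_nonneg : ∀ (k n : ℕ), 0 ≤ ∫ y : ℝ, ‖f k (z n y) - G (z n y)‖ ^ 2 :=
      fun k n => integral_nonneg fun y => by positivity
    have hc_nonneg : ∀ n : ℕ, 0 ≤ (2 : ℝ) ^ n / (Nat.factorial n : ℝ) := fun n => by positivity
    have hcs : Summable (fun n : ℕ => (2 : ℝ) ^ n / (Nat.factorial n : ℝ)) :=
      Real.summable_pow_div_factorial 2
    apply tendsto_of_tendsto_of_tendsto_of_le_of_le (g := fun _ : ℕ => (0 : ℝ))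
      (h := fun k : ℕ => (∑' n : ℕ, (2 : ℝ) ^ n / (Nat.factorial n : ℝ)) *
        ∫ y : ℝ, ‖Hkf k y - indf y‖ ^ 2 * (1 + y ^ 2)⁻¹)
    · exact tendsto_const_nhds
    · have := J_tendsto.const_mul (∑' n : ℕ, (2 : ℝ) ^ n / (Nat.factorial n : ℝ))
      simpa using this
    · intro k
      exact tsum_nonneg fun n => mul_nonneg (hc_nonneg n) (hIn_nonneg k n)
    · intro k
      have hsum2 : Summable (fun n : ℕ => (2 : ℝ) ^ n / (Nat.factorial n : ℝ) *
          ∫ y : ℝ, ‖Hkf k y - indf y‖ ^ 2 * (1 + y ^ 2)⁻¹) := hcs.mul_right _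
      have hsum1 : Summable (fun n : ℕ => (2 : ℝ) ^ n / (Nat.factorial n : ℝ) *
          ∫ y : ℝ, ‖f k (z n y) - G (z n y)‖ ^ 2) :=
        Summable.of_nonneg_of_le (fun n => mul_nonneg (hc_nonneg n) (hIn_nonneg k n))
          (fun n => mul_le_mul_of_nonneg_left (hIn_le k n) (hc_nonneg n)) hsum2
      calc (∑' n : ℕ, (2 : ℝ) ^ n / (Nat.factorial n : ℝ) *
            ∫ y : ℝ, ‖f k (z n y) - G (z n y)‖ ^ 2)
          ≤ ∑' n : ℕ, (2 : ℝ) ^ n / (Nat.factorial n : ℝ) *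
            ∫ y : ℝ, ‖Hkf k y - indf y‖ ^ 2 * (1 + y ^ 2)⁻¹ :=
            Summable.tsum_le_tsum (fun n => mul_le_mul_of_nonneg_left (hIn_le k n) (hc_nonneg n)) hsum1 hsum2
        _ = _ := tsum_mul_right
  · rintro ⟨h, hd, hae⟩
    set U : Set ℂ := {z : ℂ | 0 < z.re} with hU
    have hUopen : IsOpen U := isOpen_lt continuous_const Complex.continuous_re
    have hUconn : IsPreconnected U := (convex_halfSpace_re_gt (0:ℝ)).isPreconnected
    have hh_an : AnalyticOnNhd ℂ h U := hd.analyticOnNhd hUopen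
    have hF_an : AnalyticOnNhd ℂ (fun z => Complex.I / (1 + z)) U := by
      apply DifferentiableOn.analyticOnNhd _ hUopen
      intro z hz
      have h1 : (1 : ℂ) + z ≠ 0 := by
        intro hc
        have := congrArg Complex.re hc
        simp at this
        have : (0:ℝ) < z.re := hz
        linarith
      exact ((differentiableAt_const _).div ((differentiableAt_const _).add differentiableAt_id)
        h1).differentiableWithinAt
    have h0_an : AnalyticOnNhd ℂ (fun _ : ℂ => (0 : ℂ)) U := analyticOnNhd_const
    set L : ℝ → ℂ := fun y => ((((1:ℕ) : ℝ) / 2 : ℝ) : ℂ) + y * Complex.I with hL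
    have hLim : ∀ y : ℝ, (L y).im = y := by intro y; simp [hL]
    have hLre : ∀ y : ℝ, (L y).re = 1/2 := by intro y; simp [hL]
    have hLt : ∀ y₀ : ℝ, Tendsto L (nhdsWithin y₀ {y₀}ᶜ) (nhdsWithin (L y₀) {L y₀}ᶜ) := by
      intro y₀
      have hc : Continuous L := by
        apply continuous_const.add (Complex.continuous_ofReal.mul continuous_const)
      rw [tendsto_nhdsWithin_iff]
      constructor
      · exact (hc.tendsto y₀).mono_left nhdsWithin_le_nhds
      · refine eventually_mem_nhdsWithin.mono fun y hy => ?_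
        simp only [Set.mem_compl_iff, Set.mem_singleton_iff] at hy ⊢
        intro hc2
        exact hy (by have := congrArg Complex.im hc2; rwa [hLim, hLim] at this)
    have hae1 := hae 1 le_rfl
    have freqA : ∃ᶠ z in nhdsWithin (L 1) {L 1}ᶜ, h z = Complex.I / (1 + z) := by
      have h1 := (freq_ae hae1 1).and_eventually
        ((eventually_gt_nhds zero_lt_one).filter_mono nhdsWithin_le_nhds)
      refine (hLt 1).frequently (h1.mono fun y hy => ?_)
      rw [hy.1, hG, if_pos (by rw [hLim]; exact hy.2)]
    have freqB : ∃ᶠ z in nhdsWithin (L (-1)) {L (-1)}ᶜ, h z = (0 : ℂ) := by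
      have h1 := (freq_ae hae1 (-1)).and_eventually
        ((eventually_lt_nhds (by norm_num : (-1:ℝ) < 0)).filter_mono nhdsWithin_le_nhds)
      refine (hLt (-1)).frequently (h1.mono fun y hy => ?_)
      rw [hy.1, hG, if_neg (by rw [hLim]; exact not_lt.2 (le_of_lt hy.2))]
    have hmem1 : L 1 ∈ U := by simp only [hU, Set.mem_setOf_eq, hLre]; norm_num
    have hmem2 : L (-1) ∈ U := by simp only [hU, Set.mem_setOf_eq, hLre]; norm_num
    have e1 := hh_an.eqOn_of_preconnected_of_frequently_eq hF_an hUconn hmem1 freqA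
    have e2 := hh_an.eqOn_of_preconnected_of_frequently_eq h0_an hUconn hmem2 freqB
    have h1U : (1 : ℂ) ∈ U := by simp [hU]
    have := (e1 h1U).symm.trans (e2 h1U)
    simp only [div_eq_zero_iff] at this
    rcases this with hI | hz
    · exact Complex.I_ne_zero hI
    · norm_num at hz
end
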